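/- arXiv:1003.3024 — 6 statements merged into one kernel-verified Lean document; each statement's English description precedes it below -/
import Mathlib

section
/- A random walk on ℤ with i.i.d. integrable increments of mean ≥ 0, whose increments are not almost surely 0, attains arbitrarily high values with probability 1: almost surely, sup_n S_n = +∞ where S_n is the partial sum. -/
open MeasureTheory ProbabilityTheory Filter Set

namespace RWaux

noncomputable section

/-- Partial sums of a sequence. -/
def S (n : ℕ) (x : ℕ → ℝ) : ℝ := ∑ i ∈ Finset.range n, x i

/-- The shift on sequence space. -/
def T (x : ℕ → ℝ) : ℕ → ℝ := fun i => x (i + 1)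

/-- The (real-valued) supremum of the walk. -/
def M (x : ℕ → ℝ) : ℝ := ⨆ n, S n x

/-- The event that the walk is bounded above. -/
def A : Set (ℕ → ℝ) := {x | BddAbove (Set.range fun n => S n x)}

lemma T_iterate (x : ℕ → ℝ) (n i : ℕ) : (T^[n] x) i = x (n + i) := by
  induction n generalizing x i with
  | zero => simp
  | succ n ih =>
    rw [Function.iterate_succ_apply, ih]
    simp only [T]
    congr 1
    omega

lemma S_T_iterate (x : ℕ → ℝ) (k m : ℕ) : S m (T^[k] x) = S (k + m) x - S k x := by
  induction m with
  | zero => simp [S]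
  | succ m ih =>
    rw [S, Finset.sum_range_succ, ← S, ih, T_iterate,
      show k + (m+1) = (k+m) + 1 by ring]
    rw [show S (k + m + 1) x = ∑ i ∈ Finset.range (k+m+1), x i from rfl,
      Finset.sum_range_succ, ← S]
    ring_nf

lemma S_succ' (x : ℕ → ℝ) (n : ℕ) : S (n + 1) x = x 0 + S n (T x) := by
  have := S_T_iterate x 1 n
  simp only [Function.iterate_one] at this
  rw [show (1:ℕ) + n = n + 1 by ring] at this
  rw [this]
  simp [S]

lemma bddAbove_range_shift (f : ℕ → ℝ) (k : ℕ) :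
    BddAbove (Set.range f) ↔ BddAbove (Set.range fun m => f (k + m)) := by
  constructor
  · intro h
    exact h.mono (Set.range_comp_subset_range _ f)
  · rintro ⟨b, hb⟩
    obtain ⟨c, hc⟩ := ((Set.finite_Iio k).image f).bddAbove
    refine ⟨max b c, ?_⟩
    rintro y ⟨m, rfl⟩
    rcases lt_or_ge m k with hm | hm
    · exact le_max_of_le_right (hc ⟨m, hm, rfl⟩)
    · refine le_max_of_le_left ?_
      have : f (k + (m - k)) = f m := by congr 1; omega
      rw [← this]
      exact hb ⟨m - k, rfl⟩

lemma bddAbove_range_sub_const (g : ℕ → ℝ) (c : ℝ) :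
    BddAbove (Set.range g) ↔ BddAbove (Set.range fun m => g m - c) := by
  constructor
  · rintro ⟨b, hb⟩
    exact ⟨b - c, by rintro y ⟨m, rfl⟩; exact sub_le_sub_right (hb ⟨m, rfl⟩) c⟩
  · rintro ⟨b, hb⟩
    refine ⟨b + c, ?_⟩
    rintro y ⟨m, rfl⟩
    have := hb ⟨m, rfl⟩
    simp only at this
    linarith

lemma mem_A_iterate (x : ℕ → ℝ) (k : ℕ) : x ∈ A ↔ T^[k] x ∈ A := by
  unfold A
  simp only [Set.mem_setOf_eq]
  rw [bddAbove_range_shift _ k, bddAbove_range_sub_const (fun m => S (k + m) x) (S k x)]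
  constructor
  · intro h
    have : (fun n => S n (T^[k] x)) = fun m => S (k + m) x - S k x := by
      funext m; rw [S_T_iterate]
    rw [this]; exact h
  · intro h
    have : (fun n => S n (T^[k] x)) = fun m => S (k + m) x - S k x := by
      funext m; rw [S_T_iterate]
    rw [← this]; exact h

lemma mem_A_T (x : ℕ → ℝ) : x ∈ A ↔ T x ∈ A := by
  have := mem_A_iterate x 1
  simpa using this

lemma M_nonneg (x : ℕ → ℝ) : 0 ≤ M x := by
  by_cases hx : x ∈ A
  · have := le_ciSup hx 0
    simpa [S, M] using this
  · unfold M
    rw [Real.iSup_of_not_bddAbove hx]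

lemma M_eq (x : ℕ → ℝ) (hx : x ∈ A) : M x = max 0 (x 0 + M (T x)) := by
  have hTx : T x ∈ A := (mem_A_T x).mp hx
  apply le_antisymm
  · refine ciSup_le fun n => ?_
    cases n with
    | zero => simp [S]
    | succ n =>
      rw [S_succ']
      refine le_max_of_le_right ?_
      have h2 : S n (T x) ≤ M (T x) := le_ciSup hTx n
      linarith
  · rw [max_le_iff]
    constructor
    · have := le_ciSup hx 0; simpa [S, M] using this
    · have : M (T x) ≤ M x - x 0 := by
        refine ciSup_le fun n => ?_
        have h1 : S (n+1) x ≤ M x := le_ciSup hx (n + 1)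
        rw [S_succ'] at h1
        linarith
      linarith


lemma measurable_S (n : ℕ) : Measurable (S n) := by
  unfold S
  exact Finset.measurable_sum _ (fun i _ => measurable_pi_apply i)

lemma measurable_T : Measurable T :=
  measurable_pi_lambda _ (fun i => measurable_pi_apply (i + 1))

lemma measurable_M : Measurable M :=
  Measurable.iSup (fun n => measurable_S n)

/-- The coordinate σ-algebras on sequence space. -/
def coordSA (i : ℕ) : MeasurableSpace (ℕ → ℝ) :=
  MeasurableSpace.comap (fun x => x i) inferInstance

lemma measurable_eval_of_le {m' : MeasurableSpace (ℕ → ℝ)} {i : ℕ} (h : coordSA i ≤ m') :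
    Measurable[m'] (fun x : ℕ → ℝ => x i) := fun t ht => h _ ⟨t, ht, rfl⟩

lemma coordSA_le : ∀ i, coordSA i ≤ MeasurableSpace.pi := fun i =>
  (measurable_pi_apply i).comap_le

lemma measurableSet_A_tail (n : ℕ) :
    MeasurableSet[⨆ i, ⨆ (_ : n ≤ i), coordSA i] A := by
  set m' : MeasurableSpace (ℕ → ℝ) := ⨆ i, ⨆ (_ : n ≤ i), coordSA i with hm'
  have heval : ∀ i, n ≤ i → Measurable[m'] (fun x : ℕ → ℝ => x i) := by
    intro i hi
    exact measurable_eval_of_le (le_iSup_of_le i (le_iSup_of_le hi le_rfl))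
  have hS : ∀ m : ℕ, Measurable[m'] (fun x => S m (T^[n] x)) := by
    intro m
    have : (fun x => S m (T^[n] x)) = fun x => ∑ i ∈ Finset.range m, x (n + i) := by
      funext x
      unfold S
      exact Finset.sum_congr rfl fun i _ => T_iterate x n i
    rw [this]
    exact Finset.measurable_sum _ (fun i _ => heval (n + i) (Nat.le_add_right n i))
  have hA : A = ⋃ (q : ℚ), ⋂ (m : ℕ), {x | S m (T^[n] x) ≤ (q : ℝ)} := by
    ext x
    rw [show x ∈ A ↔ T^[n] x ∈ A from mem_A_iterate x n]
    simp only [A, Set.mem_setOf_eq, Set.mem_iUnion, Set.mem_iInter]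
    constructor
    · rintro ⟨b, hb⟩
      obtain ⟨q, hq⟩ := exists_rat_gt b
      exact ⟨q, fun m => le_trans (hb ⟨m, rfl⟩) hq.le⟩
    · rintro ⟨q, hq⟩
      exact ⟨q, by rintro y ⟨m, rfl⟩; exact hq m⟩
  rw [hA]
  exact MeasurableSet.iUnion fun q => MeasurableSet.iInter fun m =>
    measurableSet_le (hS m) measurable_const

lemma measurableSet_A : MeasurableSet A := by
  have h := measurableSet_A_tail 0
  have hle : (⨆ i, ⨆ (_ : 0 ≤ i), coordSA i) ≤ MeasurableSpace.pi :=
    iSup_le fun i => iSup_le fun _ => coordSA_le i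
  exact hle _ h

lemma abs_min_sub_min (a b c : ℝ) : |min a c - min b c| ≤ |a - b| := by
  rcases le_total a c with h1 | h1 <;> rcases le_total b c with h2 | h2 <;>
    rcases abs_cases (a - b) with ⟨h3, h4⟩ | ⟨h3, h4⟩ <;>
    simp only [min_eq_left, min_eq_right, h1, h2] <;> rw [abs_le] <;>
    constructor <;> linarith

/-- Garsia-type lemma: if `T` preserves `μ`, `f ≥ 0` is measurable, and `f - f ∘ T`
is dominated by an integrable function, then `∫ (f - f ∘ T) = 0`. -/
lemma integral_sub_comp_eq_zero {α : Type*} [MeasurableSpace α]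
    {μ : Measure α} [IsProbabilityMeasure μ] {g : α → α}
    (hg : Measurable g) (hgp : μ.map g = μ) {f bound : α → ℝ}
    (hf : Measurable f) (hf0 : ∀ x, 0 ≤ f x)
    (hbound : Integrable bound μ)
    (hdom : ∀ᵐ x ∂μ, |f x - f (g x)| ≤ bound x) :
    ∫ x, (f x - f (g x)) ∂μ = 0 := by
  have hfg : Measurable (fun x => f (g x)) := hf.comp hg
  have hD : Integrable (fun x => f x - f (g x)) μ := by
    refine Integrable.mono' hbound ((hf.sub hfg).aestronglyMeasurable) ?_
    filter_upwards [hdom] with x hx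
    simpa [Real.norm_eq_abs] using hx
  -- truncated versions
  have hmin : ∀ K : ℕ, Measurable (fun x => min (f x) (K : ℝ)) :=
    fun K => hf.min measurable_const
  have hminint : ∀ K : ℕ, Integrable (fun x => min (f x) (K : ℝ)) μ := by
    intro K
    refine Integrable.mono' (integrable_const (K : ℝ)) ((hmin K).aestronglyMeasurable) ?_
    refine Filter.Eventually.of_forall fun x => ?_
    rw [Real.norm_eq_abs, abs_le]
    constructor
    · have := hf0 x
      have : (0:ℝ) ≤ min (f x) K := le_min this (Nat.cast_nonneg K)
      linarith
    · exact min_le_right _ _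
  have hminintg : ∀ K : ℕ, Integrable (fun x => min (f (g x)) (K : ℝ)) μ := by
    intro K
    refine Integrable.mono' (integrable_const (K : ℝ)) (((hmin K).comp hg).aestronglyMeasurable) ?_
    refine Filter.Eventually.of_forall fun x => ?_
    rw [Real.norm_eq_abs, abs_le]
    constructor
    · have h0 : (0:ℝ) ≤ min (f (g x)) K := le_min (hf0 (g x)) (Nat.cast_nonneg K)
      linarith
    · exact min_le_right _ _
  have hKzero : ∀ K : ℕ, ∫ x, (min (f x) (K : ℝ) - min (f (g x)) (K : ℝ)) ∂μ = 0 := by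
    intro K
    rw [integral_sub (hminint K) (hminintg K), sub_eq_zero]
    have : ∫ x, min (f (g x)) (K : ℝ) ∂μ = ∫ y, min (f y) (K : ℝ) ∂(μ.map g) :=
      (integral_map hg.aemeasurable ((hmin K).aestronglyMeasurable)).symm
    rw [this, hgp]
  -- dominated convergence
  have htend : Filter.Tendsto (fun K : ℕ => ∫ x, (min (f x) (K : ℝ) - min (f (g x)) (K : ℝ)) ∂μ)
      Filter.atTop (nhds (∫ x, (f x - f (g x)) ∂μ)) := by
    refine tendsto_integral_of_dominated_convergence bound
      (fun K => ((hmin K).sub ((hmin K).comp hg)).aestronglyMeasurable) hbound ?_ ?_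
    · intro K
      filter_upwards [hdom] with x hx
      rw [Real.norm_eq_abs]
      exact le_trans (abs_min_sub_min _ _ _) hx
    · refine Filter.Eventually.of_forall fun x => ?_
      obtain ⟨N, hN⟩ := exists_nat_ge (max (f x) (f (g x)))
      refine Filter.Tendsto.congr' ?_ tendsto_const_nhds
      filter_upwards [Filter.eventually_ge_atTop N] with K hK
      have hK1 : f x ≤ (K : ℝ) :=
        le_trans (le_trans (le_max_left _ _) hN) (Nat.cast_le.mpr hK)
      have hK2 : f (g x) ≤ (K : ℝ) :=
        le_trans (le_trans (le_max_right _ _) hN) (Nat.cast_le.mpr hK)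
      rw [min_eq_left hK1, min_eq_left hK2]
  have := htend.congr (fun K => (hKzero K))
  exact tendsto_nhds_unique (by simpa [hKzero] using htend :
    Filter.Tendsto (fun _ : ℕ => (0:ℝ)) Filter.atTop (nhds (∫ x, (f x - f (g x)) ∂μ)))
    tendsto_const_nhds


section indep

variable {Ω : Type*} [MeasurableSpace Ω] {P : Measure Ω} [IsProbabilityMeasure P]

/-- Precomposition of an independent family with an injective index map. -/
lemma iIndepFun_precomp {ι ι' : Type*} {f : ι → Ω → ℝ}
    (h : iIndepFun f P) {g : ι' → ι} (hg : Function.Injective g)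
    [Nonempty ι'] :
    iIndepFun (fun i => f (g i)) P := by
  rw [iIndepFun_iff_measure_inter_preimage_eq_mul] at h ⊢
  intro S sets hsets
  classical
  set sets' : ι → Set ℝ := fun j => sets (Function.invFun g j) with hsets'
  have hinv : ∀ i, Function.invFun g (g i) = i := Function.leftInverse_invFun hg
  have h1 : (⋂ i ∈ S, f (g i) ⁻¹' sets i) = ⋂ j ∈ S.image g, f j ⁻¹' sets' j := by
    ext ω
    simp only [Set.mem_iInter, Finset.mem_image, Set.mem_preimage]
    constructor
    · rintro hω j ⟨i, hi, rfl⟩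
      show f (g i) ω ∈ sets (Function.invFun g (g i))
      rw [hinv i]
      exact hω i hi
    · intro hω i hi
      have : f (g i) ω ∈ sets (Function.invFun g (g i)) := hω (g i) ⟨i, hi, rfl⟩
      rwa [hinv i] at this
  have h2 : ∏ i ∈ S, P (f (g i) ⁻¹' sets i) = ∏ j ∈ S.image g, P (f j ⁻¹' sets' j) := by
    rw [Finset.prod_image (fun a _ b _ hab => hg hab)]
    refine Finset.prod_congr rfl fun i _ => ?_
    show P (f (g i) ⁻¹' sets i) = P (f (g i) ⁻¹' sets (Function.invFun g (g i)))
    rw [hinv i]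
  rw [h1, h2]
  refine h (S.image g) fun j hj => ?_
  obtain ⟨i, hi, rfl⟩ := Finset.mem_image.mp hj
  show MeasurableSet (sets (Function.invFun g (g i)))
  rw [hinv i]
  exact hsets i hi

/-- The joint law of finitely many iid random variables is the product of the marginal. -/
lemma map_tuple_eq_pi {ξ : ℕ → Ω → ℝ} (hmeas : ∀ i, Measurable (ξ i))
    (hindep : iIndepFun ξ P)
    (hident : ∀ i, IdentDistrib (ξ i) (ξ 0) P P)
    (s : Finset ℕ) (k : ℕ) :
    P.map (fun ω (i : s) => ξ ((i : ℕ) + k) ω) = Measure.pi (fun _ : s => P.map (ξ 0)) := by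
  haveI hμ0 : IsProbabilityMeasure (P.map (ξ 0)) := Measure.isProbabilityMeasure_map (hmeas 0).aemeasurable
  have htuple : Measurable (fun ω (i : s) => ξ ((i : ℕ) + k) ω) :=
    measurable_pi_lambda _ (fun i => hmeas _)
  rcases isEmpty_or_nonempty (↥s) with hs | hs
  · refine (Measure.pi_eq fun sets hsets => ?_).symm
    rw [Measure.map_apply htuple (MeasurableSet.univ_pi hsets)]
    have huniv : (Set.pi Set.univ sets) = Set.univ := by
      ext f
      simp only [Set.mem_pi, Set.mem_univ, iff_true, true_implies]
      exact fun i => (hs.false i).elim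
    rw [huniv]
    simp [Set.preimage_univ]
  · have hind' : iIndepFun (fun i : s => ξ ((i : ℕ) + k)) P :=
      iIndepFun_precomp hindep
        (fun a b hab => Subtype.ext (by omega : (a : ℕ) = b))
    refine (Measure.pi_eq fun sets hsets => ?_).symm
    rw [Measure.map_apply htuple (MeasurableSet.univ_pi hsets)]
    have hpre : (fun ω (i : s) => ξ ((i : ℕ) + k) ω) ⁻¹' Set.pi Set.univ sets
        = ⋂ i ∈ (Finset.univ : Finset s), ξ ((i : ℕ) + k) ⁻¹' sets i := by
      ext ω
      simp [Set.mem_pi]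
    rw [hpre, hind'.measure_inter_preimage_eq_mul Finset.univ (fun i _ => hsets i)]
    refine Finset.prod_congr rfl fun i _ => ?_
    rw [← ((hident ((i : ℕ) + k)).map_eq : P.map (ξ ((i : ℕ) + k)) = P.map (ξ 0)),
      Measure.map_apply (hmeas _) (hsets i)]


variable {ξ : ℕ → Ω → ℝ}

/-- The law of the shifted process equals the law of the process. -/
lemma map_shift_eq (hmeas : ∀ i, Measurable (ξ i))
    (hindep : iIndepFun ξ P)
    (hident : ∀ i, IdentDistrib (ξ i) (ξ 0) P P) :
    (P.map (fun ω i => ξ i ω)).map T = P.map (fun ω i => ξ i ω) := by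
  have hΦ : Measurable (fun ω i => ξ i ω) := measurable_pi_lambda _ hmeas
  have hΦ1 : Measurable (fun ω i => ξ (i + 1) ω) := measurable_pi_lambda _ (fun i => hmeas _)
  rw [Measure.map_map measurable_T hΦ]
  have hcomp : T ∘ (fun ω i => ξ i ω) = fun ω i => ξ (i + 1) ω := rfl
  rw [hcomp]
  haveI : IsProbabilityMeasure (P.map (fun ω i => ξ (i + 1) ω)) :=
    Measure.isProbabilityMeasure_map hΦ1.aemeasurable
  refine ext_of_generate_finite (measurableCylinders (fun _ : ℕ => ℝ))
    generateFrom_measurableCylinders.symm isPiSystem_measurableCylinders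
    (fun t ht => ?_) ?_
  · obtain ⟨s, S, hS, rfl⟩ := (mem_measurableCylinders t).mp ht
    have key : ∀ k : ℕ, (P.map (fun ω i => ξ (i + k) ω)) (cylinder s S)
        = Measure.pi (fun _ : s => P.map (ξ 0)) S := by
      intro k
      have hΨ : Measurable (fun ω i => ξ (i + k) ω) :=
        measurable_pi_lambda _ (fun i => hmeas _)
      rw [Measure.map_apply hΨ (hS.cylinder s)]
      have : (fun ω i => ξ (i + k) ω) ⁻¹' (cylinder s S)
          = (fun ω (i : s) => ξ ((i : ℕ) + k) ω) ⁻¹' S := rfl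
      rw [this, ← Measure.map_apply (measurable_pi_lambda _ (fun i => hmeas _)) hS,
        map_tuple_eq_pi hmeas hindep hident s k]
    have h0 : (fun ω i => ξ i ω) = fun ω i => ξ (i + 0) ω := by
      funext ω i; rw [Nat.add_zero]
    rw [h0, key 0, key 1]
  · have h1 : IsProbabilityMeasure (P.map (fun ω i => ξ (i + 1) ω)) :=
      Measure.isProbabilityMeasure_map hΦ1.aemeasurable
    have h2 : IsProbabilityMeasure (P.map (fun ω i => ξ i ω)) :=
      Measure.isProbabilityMeasure_map hΦ.aemeasurable
    rw [h1.measure_univ, h2.measure_univ]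

/-- The coordinates are independent under the law of the process. -/
lemma iIndepFun_coords (hmeas : ∀ i, Measurable (ξ i))
    (hindep : iIndepFun ξ P) :
    iIndepFun (fun i (x : ℕ → ℝ) => x i)
      (P.map (fun ω i => ξ i ω)) := by
  have hΦ : Measurable (fun ω i => ξ i ω) := measurable_pi_lambda _ hmeas
  rw [iIndepFun_iff_measure_inter_preimage_eq_mul]
  intro S sets hsets
  have hmeasInt : MeasurableSet (⋂ i ∈ S, (fun x : ℕ → ℝ => x i) ⁻¹' sets i) :=
    MeasurableSet.biInter S.countable_toSet
      (fun i hi => (measurable_pi_apply i) (hsets i hi))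
  rw [Measure.map_apply hΦ hmeasInt]
  have hpre : (fun ω i => ξ i ω) ⁻¹' (⋂ i ∈ S, (fun x : ℕ → ℝ => x i) ⁻¹' sets i)
      = ⋂ i ∈ S, ξ i ⁻¹' sets i := by
    ext ω; simp
  rw [hpre, hindep.measure_inter_preimage_eq_mul S hsets]
  refine Finset.prod_congr rfl fun i hi => ?_
  rw [Measure.map_apply hΦ ((measurable_pi_apply i) (hsets i hi))]
  rfl

end indep

/-- Main lemma on sequence space: under an iid law with mean `≥ 0` and nondegenerate
increments, the walk is a.s. unbounded above. -/
lemma key {ν : Measure (ℕ → ℝ)} [IsProbabilityMeasure ν]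
    (hT : ν.map T = ν)
    (hcoords : iIndepFun (fun i (x : ℕ → ℝ) => x i) ν)
    (hint : Integrable (fun x => x 0) ν)
    (hmean : 0 ≤ ∫ x, x 0 ∂ν)
    (hnz : ν {x | x 0 = 0} < 1) :
    ν A = 0 := by
  classical
  have hTpres : MeasurePreserving T ν ν := ⟨measurable_T, hT⟩
  -- Kolmogorov 0-1 law
  have hiIndep : iIndep coordSA ν := hcoords.iIndep
  have h01 : ν A = 0 ∨ ν A = 1 := by
    refine measure_zero_or_one_of_measurableSet_limsup_atTop coordSA_le hiIndep ?_
    rw [limsup_eq_iInf_iSup_of_nat]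
    rw [MeasurableSpace.measurableSet_iInf]
    intro n
    exact measurableSet_A_tail n
  rcases h01 with h | h
  · exact h
  exfalso
  have hAae : ∀ᵐ x ∂ν, x ∈ A := by
    rw [ae_iff]
    have : {x : ℕ → ℝ | ¬ x ∈ A} = Aᶜ := rfl
    rw [this, measure_compl measurableSet_A (measure_ne_top ν A), h]
    simp
  -- The Garsia-type argument
  set D : (ℕ → ℝ) → ℝ := fun x => M x - M (T x) with hD
  have hDmeas : Measurable D := measurable_M.sub (measurable_M.comp measurable_T)
  have habs : Integrable (fun x => |x 0|) ν := hint.abs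
  have hdom : ∀ᵐ x ∂ν, |D x| ≤ |x 0| := by
    filter_upwards [hAae] with x hx
    have hMeq := M_eq x hx
    have ht0 : 0 ≤ M (T x) := M_nonneg (T x)
    rw [hD]
    simp only
    rw [hMeq]
    rcases le_total (x 0 + M (T x)) 0 with hc | hc
    · rw [max_eq_left hc]
      rcases abs_cases (x 0) with ⟨h1, h2⟩ | ⟨h1, h2⟩ <;> rw [abs_le] <;>
        constructor <;> linarith
    · rw [max_eq_right hc]
      simp
  have hint0 : ∫ x, D x ∂ν = 0 :=
    integral_sub_comp_eq_zero measurable_T hT measurable_M M_nonneg habs hdom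
  have hDint : Integrable D ν := by
    refine Integrable.mono' habs hDmeas.aestronglyMeasurable ?_
    filter_upwards [hdom] with x hx
    simpa [Real.norm_eq_abs] using hx
  have hDge : ∀ᵐ x ∂ν, x 0 ≤ D x := by
    filter_upwards [hAae] with x hx
    have hMeq := M_eq x hx
    rw [hD]
    simp only
    rw [hMeq]
    have := le_max_right (0:ℝ) (x 0 + M (T x))
    linarith
  -- D = x 0 a.e.
  have hDeq : ∀ᵐ x ∂ν, D x = x 0 := by
    have hsubint : Integrable (fun x => D x - x 0) ν := hDint.sub hint
    have hnn : 0 ≤ᵐ[ν] fun x => D x - x 0 := by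
      filter_upwards [hDge] with x hx; simpa using hx
    have hle : ∫ x, (D x - x 0) ∂ν ≤ 0 := by
      rw [integral_sub hDint hint, hint0]
      linarith
    have hge : 0 ≤ ∫ x, (D x - x 0) ∂ν := integral_nonneg_of_ae hnn
    have hzero : ∫ x, (D x - x 0) ∂ν = 0 := le_antisymm hle hge
    have := (integral_eq_zero_iff_of_nonneg_ae hnn hsubint).mp hzero
    filter_upwards [this] with x hx
    have : D x - x 0 = 0 := hx
    linarith
  -- hence M x = x 0 + M (T x) a.e.
  have hMT : ∀ᵐ x ∂ν, M x = x 0 + M (T x) := by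
    filter_upwards [hDeq] with x hx
    rw [hD] at hx
    simp only at hx
    linarith
  -- mean is zero
  have hmean0 : ∫ x, x 0 ∂ν = 0 := by
    rw [← integral_congr_ae hDeq, hint0]
  -- positive probability of a negative jump
  have hmeas0 : Measurable (fun x : ℕ → ℝ => x 0) := measurable_pi_apply 0
  have hneg : ∃ t : ℝ, 0 < t ∧ 0 < ν {x | x 0 ≤ -t} := by
    by_contra hcon
    push_neg at hcon
    have hzero : ∀ n : ℕ, ν {x | x 0 ≤ -(1 / (n + 1 : ℝ))} = 0 := by
      intro n
      have h1 : (0:ℝ) < 1 / (n + 1 : ℝ) := by positivity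
      exact le_antisymm (hcon _ h1) zero_le
    have hunion : {x : ℕ → ℝ | x 0 < 0} ⊆ ⋃ n : ℕ, {x | x 0 ≤ -(1 / (n + 1 : ℝ))} := by
      intro x hx
      simp only [Set.mem_setOf_eq] at hx
      obtain ⟨n, hn⟩ := exists_nat_gt (1 / (-(x 0)))
      refine Set.mem_iUnion.mpr ⟨n, ?_⟩
      simp only [Set.mem_setOf_eq]
      have hx0 : 0 < -(x 0) := by linarith
      rw [div_lt_iff₀ hx0] at hn
      have hn1 : (1:ℝ) < (n+1) * (-(x 0)) := by
        have : (n:ℝ) * (-(x 0)) ≤ (n+1) * (-(x 0)) := by nlinarith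
        linarith
      rw [le_neg]
      rw [div_le_iff₀ (by positivity : (0:ℝ) < (n + 1 : ℝ))] at *
      nlinarith
    have hneg0 : ν {x : ℕ → ℝ | x 0 < 0} = 0 :=
      measure_mono_null hunion (by
        rw [measure_iUnion_null_iff]
        exact hzero)
    -- then x 0 ≥ 0 a.e., and mean zero forces x 0 = 0 a.e., contradicting hnz
    have hge0 : 0 ≤ᵐ[ν] fun x => x 0 := by
      have hh : ∀ᵐ x ∂ν, (0:ℝ) ≤ x 0 := by
        rw [ae_iff]
        have heq : {x : ℕ → ℝ | ¬ (0:ℝ) ≤ x 0} = {x | x 0 < 0} := by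
          ext x; simp [not_le]
        rw [heq]
        exact hneg0
      exact hh
    have := (integral_eq_zero_iff_of_nonneg_ae hge0 hint).mp hmean0
    have hone : ν {x | x 0 = 0} = 1 := by
      have h1 : ∀ᵐ x ∂ν, x 0 = 0 := by
        filter_upwards [this] with x hx
        exact hx
      have h2 := measure_mono_null (t := {x : ℕ → ℝ | ¬ x 0 = 0}) (fun x hx => hx) h1
      have h3 : {x : ℕ → ℝ | x 0 = 0} = {x : ℕ → ℝ | ¬ x 0 = 0}ᶜ := by
        ext x; simp
      have h4 : MeasurableSet {x : ℕ → ℝ | ¬ x 0 = 0} :=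
        (hmeas0 (measurableSet_singleton 0)).compl
      rw [h3, measure_compl h4 (measure_ne_top ν _), h2]
      simp
    rw [hone] at hnz
    exact lt_irrefl _ hnz
  obtain ⟨t, ht, htpos⟩ := hneg
  -- independence: the event M ∘ T < t is independent of x 0
  have hMTmeas' : Measurable[⨆ i ∈ ({0} : Set ℕ)ᶜ, coordSA i] (fun x => M (T x)) := by
    have heval : ∀ i : ℕ, i ≠ 0 → Measurable[⨆ i ∈ ({0} : Set ℕ)ᶜ, coordSA i]
        (fun x : ℕ → ℝ => x i) := by
      intro i hi
      refine measurable_eval_of_le ?_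
      refine le_trans ?_ (le_iSup _ i)
      simp [hi]
    have hSn : ∀ n : ℕ, Measurable[⨆ i ∈ ({0} : Set ℕ)ᶜ, coordSA i]
        (fun x => S n (T x)) := by
      intro n
      have : (fun x : ℕ → ℝ => S n (T x)) = fun x => ∑ i ∈ Finset.range n, x (i + 1) := by
        funext x; rfl
      rw [this]
      exact Finset.measurable_sum _ (fun i _ => heval (i + 1) (Nat.succ_ne_zero i))
    exact Measurable.iSup hSn
  have hindepFG : ν ({x | x 0 ≤ -t} ∩ {x | M (T x) < t})
      = ν {x | x 0 ≤ -t} * ν {x | M (T x) < t} := by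
    have hI : Indep (⨆ i ∈ ({0} : Set ℕ), coordSA i) (⨆ i ∈ ({0} : Set ℕ)ᶜ, coordSA i) ν :=
      indep_biSup_compl coordSA_le hiIndep {0}
    rw [Indep_iff] at hI
    refine hI _ _ ?_ ?_
    · have h0 : coordSA 0 ≤ ⨆ i ∈ ({0} : Set ℕ), coordSA i := by
        refine le_trans ?_ (le_iSup _ 0)
        simp
      refine h0 _ ?_
      exact ⟨Set.Iic (-t), measurableSet_Iic, rfl⟩
    · exact hMTmeas' measurableSet_Iio
  -- a.e. x 0 + M (T x) ≥ 0
  have hnonnegsum : ∀ᵐ x ∂ν, 0 ≤ x 0 + M (T x) := by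
    filter_upwards [hMT] with x hx
    rw [← hx]
    exact M_nonneg x
  have hFzero : ν {x | M (T x) < t} = 0 := by
    have hsub : {x : ℕ → ℝ | x 0 ≤ -t} ∩ {x | M (T x) < t}
        ⊆ {x : ℕ → ℝ | ¬ 0 ≤ x 0 + M (T x)} := by
      rintro x ⟨h1, h2⟩
      simp only [Set.mem_setOf_eq] at *
      intro hcon
      linarith
    have h0 : ν ({x : ℕ → ℝ | x 0 ≤ -t} ∩ {x | M (T x) < t}) = 0 := by
      refine measure_mono_null hsub ?_
      rw [← ae_iff] at *
      exact hnonnegsum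
    rw [h0] at hindepFG
    rcases mul_eq_zero.mp hindepFG.symm with h' | h'
    · exact absurd h' (ne_of_gt htpos)
    · exact h'
  have hMget : ∀ᵐ x ∂ν, t ≤ M x := by
    have hmeasMt : MeasurableSet {x : ℕ → ℝ | M x < t} := measurable_M measurableSet_Iio
    have : ν {x | M x < t} = 0 := by
      have := Measure.map_apply measurable_T (μ := ν) hmeasMt
      rw [hT] at this
      rw [this]
      exact hFzero
    rw [ae_iff]
    have hset : {x : ℕ → ℝ | ¬ t ≤ M x} = {x | M x < t} := by
      ext x; simp [not_le]
    rw [hset]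
    exact this
  -- pull back a.e. statements along iterates of T
  have pull : ∀ (Q : (ℕ → ℝ) → Prop), MeasurableSet {y | Q y} → (∀ᵐ y ∂ν, Q y) →
      ∀ n : ℕ, ∀ᵐ x ∂ν, Q (T^[n] x) := by
    intro Q hQ hae n
    have hTn : MeasurePreserving (T^[n]) ν ν := hTpres.iterate n
    rw [ae_iff] at hae ⊢
    have hpre : {x | ¬ Q (T^[n] x)} = (T^[n]) ⁻¹' {y | ¬ Q y} := rfl
    have hQc : MeasurableSet {y | ¬ Q y} := by
      have : {y | ¬ Q y} = {y | Q y}ᶜ := rfl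
      rw [this]; exact hQ.compl
    rw [hpre, hTn.measure_preimage hQc.nullMeasurableSet]
    exact hae
  have hiterEq : ∀ᵐ x ∂ν, ∀ n : ℕ, M (T^[n] x) = (T^[n] x) 0 + M (T^[n + 1] x) := by
    rw [ae_all_iff]
    intro n
    have hQ : MeasurableSet {y : ℕ → ℝ | M y = y 0 + M (T y)} :=
      measurableSet_eq_fun measurable_M
        ((measurable_pi_apply 0).add (measurable_M.comp measurable_T))
    have := pull (fun y => M y = y 0 + M (T y)) hQ hMT n
    filter_upwards [this] with x hx
    rw [Function.iterate_succ_apply']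
    exact hx
  have hiterGe : ∀ᵐ x ∂ν, ∀ n : ℕ, t ≤ M (T^[n] x) := by
    rw [ae_all_iff]
    intro n
    have hQ : MeasurableSet {y : ℕ → ℝ | t ≤ M y} :=
      measurable_M measurableSet_Ici
    exact pull (fun y => t ≤ M y) hQ hMget n
  -- combine and derive the contradiction
  haveI : (MeasureTheory.ae ν).NeBot := ae_neBot.mpr (IsProbabilityMeasure.ne_zero ν)
  obtain ⟨x, hxA, hxEq, hxGe⟩ := (hAae.and (hiterEq.and hiterGe)).exists
  have hSn : ∀ n : ℕ, M x = S n x + M (T^[n] x) := by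
    intro n
    induction n with
    | zero => simp [S]
    | succ n ih =>
      rw [ih, hxEq n, T_iterate x n 0]
      have : S (n + 1) x = S n x + x n := by
        rw [S, Finset.sum_range_succ, ← S]
      rw [this]
      ring_nf
  have hbnd : ∀ n : ℕ, S n x ≤ M x - t := by
    intro n
    have h1 := hxGe n
    have h2 := hSn n
    linarith
  have : M x ≤ M x - t := ciSup_le hbnd
  linarith

end

end RWaux

open RWaux in
/-- A random walk with i.i.d. integrable increments of mean `≥ 0`, whose increments
are not almost surely `0`, attains arbitrarily high values with probability 1:
almost surely `sup_n S_n = +∞`. -/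
theorem random_walk_sup_infinite {Ω : Type*} [MeasurableSpace Ω]
    (P : Measure Ω) [IsProbabilityMeasure P]
    (ξ : ℕ → Ω → ℝ) (hmeas : ∀ i, Measurable (ξ i))
    (hindep : iIndepFun ξ P)
    (hident : ∀ i, IdentDistrib (ξ i) (ξ 0) P P)
    (hint : Integrable (ξ 0) P)
    (hmean : 0 ≤ ∫ ω, ξ 0 ω ∂P)
    (hnz : P {ω | ξ 0 ω = 0} < 1) :
    ∀ᵐ ω ∂P, (⨆ n : ℕ, ((∑ i ∈ Finset.range n, ξ i ω : ℝ) : EReal)) = ⊤ := by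
  have hΦ : Measurable (fun ω i => ξ i ω) := measurable_pi_lambda _ hmeas
  set ν : Measure (ℕ → ℝ) := P.map (fun ω i => ξ i ω) with hν
  haveI : IsProbabilityMeasure ν := Measure.isProbabilityMeasure_map hΦ.aemeasurable
  have heval0 : Measurable (fun x : ℕ → ℝ => x 0) := measurable_pi_apply 0
  -- transfer the hypotheses to the sequence space
  have hTinv : ν.map T = ν := map_shift_eq hmeas hindep hident
  have hcoords : iIndepFun (fun i (x : ℕ → ℝ) => x i) ν :=
    iIndepFun_coords hmeas hindep
  have hint' : Integrable (fun x : ℕ → ℝ => x 0) ν := by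
    rw [hν, integrable_map_measure heval0.aestronglyMeasurable hΦ.aemeasurable]
    exact hint
  have hmean' : 0 ≤ ∫ x, x 0 ∂ν := by
    rw [hν, integral_map hΦ.aemeasurable heval0.aestronglyMeasurable]
    exact hmean
  have hnz' : ν {x | x 0 = 0} < 1 := by
    have hset : MeasurableSet {x : ℕ → ℝ | x 0 = 0} := heval0 (measurableSet_singleton 0)
    rw [hν, Measure.map_apply hΦ hset]
    exact hnz
  have hA0 : ν A = 0 := key hTinv hcoords hint' hmean' hnz'
  -- pull back to Ω
  have hae : ∀ᵐ ω ∂P, (fun i => ξ i ω) ∉ A := by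
    have h1 : ∀ᵐ x ∂ν, x ∉ A := by
      rw [ae_iff]
      have : {x : ℕ → ℝ | ¬ x ∉ A} = A := by ext x; simp
      rw [this]
      exact hA0
    rw [hν] at h1
    exact (ae_map_iff hΦ.aemeasurable measurableSet_A.compl).mp h1
  filter_upwards [hae] with ω hω
  -- pointwise: unbounded walk has supremum ⊤ in EReal
  have hunbdd : ¬ BddAbove (Set.range fun n => S n (fun i => ξ i ω)) := hω
  by_contra hcon
  apply hunbdd
  set L : EReal := ⨆ n : ℕ, ((∑ i ∈ Finset.range n, ξ i ω : ℝ) : EReal) with hL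
  have hle : ∀ n : ℕ, ((∑ i ∈ Finset.range n, ξ i ω : ℝ) : EReal) ≤ L := fun n => by
    rw [hL]
    exact le_iSup (fun n : ℕ => ((∑ i ∈ Finset.range n, ξ i ω : ℝ) : EReal)) n
  have hLne : L ≠ ⊤ := hcon
  have hLnb : L ≠ ⊥ := by
    intro hbot
    have := hle 0
    rw [hbot] at this
    simp at this
  refine ⟨L.toReal, ?_⟩
  rintro y ⟨n, rfl⟩
  have h1 : ((S n (fun i => ξ i ω) : ℝ) : EReal) ≤ L := hle n
  have h2 : L = ((L.toReal : ℝ) : EReal) := (EReal.coe_toReal hLne hLnb).symm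
  rw [h2] at h1
  exact_mod_cast h1
end

section
/- Truncation lemma for tandem queues: Let A, S₁, S₂ : ℤ → ℕ and for s ∈ ℤ let A|_{(−s,∞)} be A truncated to be 0 before time −s. Let D₂ = D(D(A,S₁),S₂) and D₂^{(s)} = D(D(A|_{(−s,∞)},S₁),S₂) be the departures from the two-queue tandem with original and truncated arrivals. Then for every n ∈ ℤ there exists s₀ such that for all s ≥ s₀, D₂^{(s)}(n) = D₂(n). -/
open Filter


/-- Queue length at time `n` for arrivals `A` and services `S`. -/
noncomputable def qX (A S : ℤ → ℕ) (n : ℤ) : ℕ∞ :=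
  ⨆ (m : ℤ) (_ : m ≤ n), ((∑ r ∈ Finset.Ico m n, ((A r : ℤ) - (S r : ℤ))).toNat : ℕ∞)

/-- Departures at time `n`: `min(X(n) + A(n), S(n))`, with `min(∞, s) = s`. -/
noncomputable def qD (A S : ℤ → ℕ) (n : ℤ) : ℕ :=
  (min (qX A S n + (A n : ℕ∞)) ((S n : ℕ∞))).toNat

/-- `A` truncated to vanish before time `-s`. -/
def truncBefore (A : ℤ → ℕ) (s : ℤ) : ℤ → ℕ := fun n => if n < -s then 0 else A n

lemma le_qX (B S : ℤ → ℕ) {m n : ℤ} (hm : m ≤ n) :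
    (((∑ r ∈ Finset.Ico m n, ((B r : ℤ) - (S r : ℤ))).toNat : ℕ∞)) ≤ qX B S n :=
  le_iSup₂_of_le m hm le_rfl

lemma qX_mono {B B' : ℤ → ℕ} (S : ℤ → ℕ) (h : ∀ r, B r ≤ B' r) (n : ℤ) :
    qX B S n ≤ qX B' S n := by
  refine iSup₂_le fun m hm => le_trans ?_ (le_qX B' S hm)
  have hsum : (∑ r ∈ Finset.Ico m n, ((B r : ℤ) - (S r : ℤ)))
      ≤ ∑ r ∈ Finset.Ico m n, ((B' r : ℤ) - (S r : ℤ)) := by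
    refine Finset.sum_le_sum fun r _ => ?_
    have := h r
    omega
  exact_mod_cast Int.toNat_le_toNat hsum

lemma qD_mono {B B' : ℤ → ℕ} (S : ℤ → ℕ) (h : ∀ r, B r ≤ B' r) (n : ℤ) :
    qD B S n ≤ qD B' S n := by
  apply ENat.toNat_le_toNat
  · exact min_le_min (add_le_add (qX_mono S h n) (by exact_mod_cast h n)) le_rfl
  · exact ne_top_of_le_ne_top (by simp) (min_le_right _ _)

lemma exists_witness {B S : ℤ → ℕ} {n : ℤ} {c : ℕ} (hc : 0 < c)
    (h : (c : ℕ∞) ≤ qX B S n) :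
    ∃ m ≤ n, c ≤ (∑ r ∈ Finset.Ico m n, ((B r : ℤ) - (S r : ℤ))).toNat := by
  have h' : ((c - 1 : ℕ) : ℕ∞) < qX B S n :=
    lt_of_lt_of_le (by exact_mod_cast Nat.sub_lt hc one_pos) h
  rw [qX, lt_iSup_iff] at h'
  obtain ⟨m, hm⟩ := h'
  rw [lt_iSup_iff] at hm
  obtain ⟨hmn, hlt⟩ := hm
  refine ⟨m, hmn, ?_⟩
  have := Nat.cast_lt (α := ℕ∞) |>.mp hlt
  omega

lemma qD_eventually_eq {B : ℤ → ℕ} {Bs : ℤ → ℤ → ℕ} (S : ℤ → ℕ)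
    (hle : ∀ s r, Bs s r ≤ B r)
    (hpt : ∀ r, ∀ᶠ s in atTop, Bs s r = B r) (n : ℤ) :
    ∀ᶠ s in atTop, qD (Bs s) S n = qD B S n := by
  have key : ∀ m ≤ n, ∀ᶠ s in atTop, ∀ r ∈ Finset.Icc m n, Bs s r = B r := by
    intro m _
    exact (Filter.eventually_all_finset _).2 fun r _ => hpt r
  by_cases hcase : (S n : ℕ∞) ≤ qX B S n + (B n : ℕ∞)
  · -- the min is `S n` on both sides, eventually
    have hqD : qD B S n = S n := by
      rw [qD, min_eq_right hcase, ENat.toNat_coe]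
    by_cases hc : S n ≤ B n
    · filter_upwards [hpt n] with s hs
      have h1 : (S n : ℕ∞) ≤ qX (Bs s) S n + (Bs s n : ℕ∞) := by
        rw [hs]
        exact le_trans (by exact_mod_cast hc) le_add_self
      rw [qD, min_eq_right h1, ENat.toNat_coe, hqD]
    · set c : ℕ := S n - B n with hcdef
      have hcpos : 0 < c := by omega
      have hSc : (S n : ℕ∞) = (c : ℕ∞) + (B n : ℕ∞) := by
        have : S n = c + B n := by omega
        exact_mod_cast congrArg (Nat.cast : ℕ → ℕ∞) this
      have hXc : (c : ℕ∞) ≤ qX B S n := by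
        rw [hSc] at hcase
        exact (WithTop.add_le_add_iff_right (ENat.coe_ne_top _)).1 hcase
      obtain ⟨m, hmn, hsum⟩ := exists_witness hcpos hXc
      filter_upwards [key m hmn] with s hs
      have hsumeq : (∑ r ∈ Finset.Ico m n, ((Bs s r : ℤ) - (S r : ℤ)))
          = ∑ r ∈ Finset.Ico m n, ((B r : ℤ) - (S r : ℤ)) := by
        refine Finset.sum_congr rfl fun r hr => ?_
        rw [hs r (Finset.mem_Icc.2 ⟨(Finset.mem_Ico.1 hr).1, le_of_lt (Finset.mem_Ico.1 hr).2⟩)]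
      have h2 : (c : ℕ∞) ≤ qX (Bs s) S n := by
        refine le_trans ?_ (le_qX (Bs s) S hmn)
        rw [hsumeq]
        exact_mod_cast hsum
      have hBn : Bs s n = B n := hs n (Finset.mem_Icc.2 ⟨hmn, le_rfl⟩)
      have h1 : (S n : ℕ∞) ≤ qX (Bs s) S n + (Bs s n : ℕ∞) := by
        rw [hBn, hSc]
        exact add_le_add h2 le_rfl
      rw [qD, min_eq_right h1, ENat.toNat_coe, hqD]
  · -- the min is `qX + B n`, finite, on both sides, eventually
    have hlt : qX B S n + (B n : ℕ∞) < (S n : ℕ∞) := lt_of_not_ge hcase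
    have hne : qX B S n ≠ ⊤ := fun h => by simp [h, top_add] at hlt
    set X : ℕ := (qX B S n).toNat with hXdef
    have hX : qX B S n = (X : ℕ∞) := (ENat.coe_toNat hne).symm
    have hwit : ∃ m ≤ n, X ≤ (∑ r ∈ Finset.Ico m n, ((B r : ℤ) - (S r : ℤ))).toNat := by
      rcases Nat.eq_zero_or_pos X with h0 | hpos
      · exact ⟨n, le_rfl, by simp [h0]⟩
      · exact exists_witness hpos (le_of_eq hX.symm)
    obtain ⟨m, hmn, hsum⟩ := hwit
    filter_upwards [key m hmn] with s hs
    have hsumeq : (∑ r ∈ Finset.Ico m n, ((Bs s r : ℤ) - (S r : ℤ)))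
        = ∑ r ∈ Finset.Ico m n, ((B r : ℤ) - (S r : ℤ)) := by
      refine Finset.sum_congr rfl fun r hr => ?_
      rw [hs r (Finset.mem_Icc.2 ⟨(Finset.mem_Ico.1 hr).1, le_of_lt (Finset.mem_Ico.1 hr).2⟩)]
    have hXs_le : qX (Bs s) S n ≤ (X : ℕ∞) := hX ▸ qX_mono S (hle s) n
    have hXs_ge : (X : ℕ∞) ≤ qX (Bs s) S n := by
      refine le_trans ?_ (le_qX (Bs s) S hmn)
      rw [hsumeq]
      exact_mod_cast hsum
    have hXeq : qX (Bs s) S n = qX B S n := by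
      rw [hX]; exact le_antisymm hXs_le hXs_ge
    have hBn : Bs s n = B n := hs n (Finset.mem_Icc.2 ⟨hmn, le_rfl⟩)
    rw [qD, qD, hXeq, hBn]

/-- Truncation lemma for tandem queues: the departures from the two-queue tandem
at any fixed time `n` agree with those for the truncated arrival process, for all
sufficiently large truncation parameters `s`. -/
theorem tandem_truncation (A S₁ S₂ : ℤ → ℕ) (n : ℤ) :
    ∃ s₀ : ℤ, ∀ s : ℤ, s₀ ≤ s →
      qD (qD (truncBefore A s) S₁) S₂ n = qD (qD A S₁) S₂ n := by
  have hle1 : ∀ s r, truncBefore A s r ≤ A r := by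
    intro s r
    unfold truncBefore
    split <;> omega
  have hpt1 : ∀ r, ∀ᶠ s in atTop, truncBefore A s r = A r := by
    intro r
    rw [eventually_atTop]
    exact ⟨-r, fun s hs => by unfold truncBefore; rw [if_neg (by omega)]⟩
  have h1 := qD_eventually_eq S₁ hle1 hpt1
  have hle2 : ∀ s r, qD (truncBefore A s) S₁ r ≤ qD A S₁ r :=
    fun s r => qD_mono S₁ (hle1 s) r
  have h2 := qD_eventually_eq (B := qD A S₁)
    (Bs := fun s => qD (truncBefore A s) S₁) S₂ hle2 h1 n
  rw [eventually_atTop] at h2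
  obtain ⟨s₀, hs₀⟩ := h2
  exact ⟨s₀, hs₀⟩
end

section
/- Departure representation for a tandem of two queues started empty: Suppose A(n) = 0 for all n < 0. Let D₂ = D(D(A,S₁),S₂). Then for all t ≥ 1, ∑_{r=0}^{t−1} D₂(r) = min over 0 ≤ u₁ ≤ u₂ ≤ t of [ ∑_{r=0}^{u₁−1} A(r) + ∑_{r=u₁}^{u₂−1} S₁(r) + ∑_{r=u₂}^{t−1} S₂(r) ]. -/
namespace TandemAux

lemma sum_Ico_consec' {M : Type*} [AddCommMonoid M] {a b c : ℤ} (h1 : a ≤ b) (h2 : b ≤ c)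
    (f : ℤ → M) :
    ∑ i ∈ Finset.Ico a b, f i + ∑ i ∈ Finset.Ico b c, f i = ∑ i ∈ Finset.Ico a c, f i := by
  rw [← Finset.sum_union (Finset.Ico_disjoint_Ico_consecutive a b c),
    Finset.Ico_union_Ico_eq_Ico h1 h2]

lemma sum_Ico_succ_top' {M : Type*} [AddCommMonoid M] {a b : ℤ} (h : a ≤ b) (f : ℤ → M) :
    ∑ r ∈ Finset.Ico a (b + 1), f r = ∑ r ∈ Finset.Ico a b, f r + f b := by
  have hins : Finset.Ico a (b + 1) = insert b (Finset.Ico a b) := by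
    ext x; simp only [Finset.mem_Ico, Finset.mem_insert]; omega
  rw [hins, Finset.sum_insert (by simp), add_comm]

/-- Finitary queue length. -/
noncomputable def X' (A S : ℤ → ℕ) (t : ℤ) : ℕ :=
  (Finset.Icc 0 t).sup fun m => (∑ r ∈ Finset.Ico m t, ((A r : ℤ) - (S r : ℤ))).toNat

lemma le_X' {A S : ℤ → ℕ} {m t : ℤ} (h0 : 0 ≤ m) (hm : m ≤ t) :
    (∑ r ∈ Finset.Ico m t, ((A r : ℤ) - (S r : ℤ))).toNat ≤ X' A S t :=
  Finset.le_sup (f := fun m => (∑ r ∈ Finset.Ico m t, ((A r : ℤ) - (S r : ℤ))).toNat)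
    (Finset.mem_Icc.mpr ⟨h0, hm⟩)

lemma qX_eq {A S : ℤ → ℕ} (hA : ∀ n : ℤ, n < 0 → A n = 0) {t : ℤ} (ht : 0 ≤ t) :
    qX A S t = (X' A S t : ℕ∞) := by
  apply le_antisymm
  · refine iSup_le fun m => iSup_le fun hm => ?_
    rcases le_or_gt 0 m with h0 | h0
    · exact Nat.cast_le.mpr (le_X' h0 hm)
    · have hsplit : ∑ r ∈ Finset.Ico m 0, ((A r : ℤ) - (S r : ℤ))
          + ∑ r ∈ Finset.Ico 0 t, ((A r : ℤ) - (S r : ℤ))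
          = ∑ r ∈ Finset.Ico m t, ((A r : ℤ) - (S r : ℤ)) :=
        sum_Ico_consec' h0.le ht _
      have hneg : ∑ r ∈ Finset.Ico m 0, ((A r : ℤ) - (S r : ℤ)) ≤ 0 := by
        apply Finset.sum_nonpos
        intro r hr
        have hr0 : r < 0 := (Finset.mem_Ico.mp hr).2
        simp [hA r hr0]
      have hle : (∑ r ∈ Finset.Ico m t, ((A r : ℤ) - (S r : ℤ))).toNat
          ≤ (∑ r ∈ Finset.Ico 0 t, ((A r : ℤ) - (S r : ℤ))).toNat := by omega
      calc ((∑ r ∈ Finset.Ico m t, ((A r : ℤ) - (S r : ℤ))).toNat : ℕ∞)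
          ≤ ((∑ r ∈ Finset.Ico 0 t, ((A r : ℤ) - (S r : ℤ))).toNat : ℕ∞) :=
            Nat.cast_le.mpr hle
        _ ≤ _ := Nat.cast_le.mpr (le_X' le_rfl ht)
  · obtain ⟨m, hm, hEq⟩ := Finset.exists_mem_eq_sup (Finset.Icc 0 t) ⟨0, by simp [ht]⟩
      (fun m => (∑ r ∈ Finset.Ico m t, ((A r : ℤ) - (S r : ℤ))).toNat)
    rw [X', hEq]
    exact le_iSup₂ (f := fun (m : ℤ) (_ : m ≤ t) =>
      (((∑ r ∈ Finset.Ico m t, ((A r : ℤ) - (S r : ℤ))).toNat : ℕ∞))) m (Finset.mem_Icc.mp hm).2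

lemma cast_min (a b : ℕ) : ((min a b : ℕ) : ℕ∞) = min (a : ℕ∞) b := by
  rcases le_total a b with h | h <;> simp [min_eq_left, min_eq_right, h, Nat.cast_le.mpr h]

lemma qD_eq {A S : ℤ → ℕ} (hA : ∀ n : ℤ, n < 0 → A n = 0) {n : ℤ} (hn : 0 ≤ n) :
    qD A S n = min (X' A S n + A n) (S n) := by
  rw [qD, qX_eq hA hn, ← Nat.cast_add, ← cast_min]
  simp

lemma qD_neg {A S : ℤ → ℕ} (hA : ∀ n : ℤ, n < 0 → A n = 0) {n : ℤ} (hn : n < 0) :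
    qD A S n = 0 := by
  have hX : qX A S n = 0 := by
    refine le_antisymm (iSup_le fun m => iSup_le fun hm => ?_) (zero_le)
    have hsum : ∑ r ∈ Finset.Ico m n, ((A r : ℤ) - (S r : ℤ)) ≤ 0 := by
      apply Finset.sum_nonpos
      intro r hr
      have hr0 : r < 0 := lt_of_lt_of_le (Finset.mem_Ico.mp hr).2 hn.le
      simp [hA r hr0]
    have h0 : (∑ r ∈ Finset.Ico m n, ((A r : ℤ) - (S r : ℤ))).toNat = 0 := by omega
    simp only [h0, Nat.cast_zero, le_refl]
  rw [qD, hX, hA n hn]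
  simp

lemma X'_succ {A S : ℤ → ℕ} {n : ℤ} (hn : 0 ≤ n) :
    X' A S (n + 1) = X' A S n + A n - S n := by
  apply le_antisymm
  · apply Finset.sup_le
    intro m hm
    obtain ⟨hm0, hm1⟩ := Finset.mem_Icc.mp hm
    rcases eq_or_lt_of_le hm1 with hEq | hlt
    · subst hEq; simp
    · have hmn : m ≤ n := by omega
      rw [sum_Ico_succ_top' hmn]
      have h1 : (∑ r ∈ Finset.Ico m n, ((A r : ℤ) - (S r : ℤ))).toNat ≤ X' A S n :=
        le_X' hm0 hmn
      omega
  · obtain ⟨m₀, hm₀, hEq⟩ := Finset.exists_mem_eq_sup (Finset.Icc 0 n) ⟨0, by simp [hn]⟩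
      (fun m => (∑ r ∈ Finset.Ico m n, ((A r : ℤ) - (S r : ℤ))).toNat)
    obtain ⟨hm₀0, hm₀n⟩ := Finset.mem_Icc.mp hm₀
    have h1 : (∑ r ∈ Finset.Ico m₀ (n + 1), ((A r : ℤ) - (S r : ℤ))).toNat ≤ X' A S (n + 1) :=
      le_X' hm₀0 (by omega)
    have h2 : (∑ r ∈ Finset.Ico n (n + 1), ((A r : ℤ) - (S r : ℤ))).toNat ≤ X' A S (n + 1) :=
      le_X' hn (by omega)
    rw [sum_Ico_succ_top' hm₀n] at h1
    rw [sum_Ico_succ_top' (le_refl n), Finset.Ico_self, Finset.sum_empty, zero_add] at h2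
    have hX : X' A S n = (∑ r ∈ Finset.Ico m₀ n, ((A r : ℤ) - (S r : ℤ))).toNat := hEq
    rw [hX]
    omega

lemma sum_qD {A S : ℤ → ℕ} (hA : ∀ n : ℤ, n < 0 → A n = 0) :
    ∀ t : ℤ, 0 ≤ t →
      ∑ r ∈ Finset.Ico (0 : ℤ) t, qD A S r + X' A S t = ∑ r ∈ Finset.Ico (0 : ℤ) t, A r := by
  refine Int.le_induction ?_ ?_
  · simp [X']
  · intro n hn ih
    rw [sum_Ico_succ_top' hn, sum_Ico_succ_top' hn (f := A), X'_succ hn, qD_eq hA hn]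
    omega

lemma X'_sub {A S : ℤ → ℕ} {u t : ℤ} (hu : 0 ≤ u) (hut : u ≤ t) :
    (∑ r ∈ Finset.Ico u t, ((A r : ℤ) - (S r : ℤ)))
      = (∑ r ∈ Finset.Ico u t, A r : ℕ) - (∑ r ∈ Finset.Ico u t, S r : ℕ) := by
  push_cast
  rw [Finset.sum_sub_distrib]

lemma sum_qD_le {A S : ℤ → ℕ} (hA : ∀ n : ℤ, n < 0 → A n = 0) {t u : ℤ}
    (ht : 0 ≤ t) (hu : 0 ≤ u) (hut : u ≤ t) :
    ∑ r ∈ Finset.Ico (0 : ℤ) t, qD A S r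
      ≤ ∑ r ∈ Finset.Ico (0 : ℤ) u, A r + ∑ r ∈ Finset.Ico u t, S r := by
  have key := sum_qD (A := A) (S := S) hA t ht
  have hsplit : ∑ r ∈ Finset.Ico (0 : ℤ) u, A r + ∑ r ∈ Finset.Ico u t, A r
      = ∑ r ∈ Finset.Ico (0 : ℤ) t, A r := sum_Ico_consec' hu hut A
  have hX : (∑ r ∈ Finset.Ico u t, ((A r : ℤ) - (S r : ℤ))).toNat ≤ X' A S t :=
    le_X' hu hut
  rw [X'_sub hu hut] at hX
  omega

lemma sum_qD_attained {A S : ℤ → ℕ} (hA : ∀ n : ℤ, n < 0 → A n = 0) {t : ℤ} (ht : 0 ≤ t) :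
    ∃ u : ℤ, 0 ≤ u ∧ u ≤ t ∧
      ∑ r ∈ Finset.Ico (0 : ℤ) t, qD A S r
        = ∑ r ∈ Finset.Ico (0 : ℤ) u, A r + ∑ r ∈ Finset.Ico u t, S r := by
  have key := sum_qD (A := A) (S := S) hA t ht
  obtain ⟨u₀, hu₀, hEq⟩ := Finset.exists_mem_eq_sup (Finset.Icc 0 t) ⟨0, by simp [ht]⟩
    (fun m => (∑ r ∈ Finset.Ico m t, ((A r : ℤ) - (S r : ℤ))).toNat)
  obtain ⟨hu₀0, hu₀t⟩ := Finset.mem_Icc.mp hu₀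
  have hsplit : ∑ r ∈ Finset.Ico (0 : ℤ) u₀, A r + ∑ r ∈ Finset.Ico u₀ t, A r
      = ∑ r ∈ Finset.Ico (0 : ℤ) t, A r := sum_Ico_consec' hu₀0 hu₀t A
  have hX : X' A S t = (∑ r ∈ Finset.Ico u₀ t, ((A r : ℤ) - (S r : ℤ))).toNat := hEq
  rw [X'_sub hu₀0 hu₀t] at hX
  rcases le_or_gt (∑ r ∈ Finset.Ico u₀ t, S r) (∑ r ∈ Finset.Ico u₀ t, A r) with h | h
  · exact ⟨u₀, hu₀0, hu₀t, by omega⟩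
  · refine ⟨t, ht, le_rfl, ?_⟩
    rw [Finset.Ico_self, Finset.sum_empty]
    omega

end TandemAux

open TandemAux in
/-- Departure representation for a tandem of two queues started empty:
if `A(n) = 0` for `n < 0`, the cumulative departures from the second queue up to
time `t` are given by the variational (last-passage) formula. -/
theorem tandem_departure_representation (A S₁ S₂ : ℤ → ℕ)
    (hA : ∀ n : ℤ, n < 0 → A n = 0) (t : ℤ) (ht : 1 ≤ t) :
    ∑ r ∈ Finset.Ico (0 : ℤ) t, qD (qD A S₁) S₂ r
      = sInf {x : ℕ | ∃ u₁ u₂ : ℤ, 0 ≤ u₁ ∧ u₁ ≤ u₂ ∧ u₂ ≤ t ∧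
          x = ∑ r ∈ Finset.Ico (0 : ℤ) u₁, A r
              + ∑ r ∈ Finset.Ico u₁ u₂, S₁ r
              + ∑ r ∈ Finset.Ico u₂ t, S₂ r} := by
  have ht0 : (0 : ℤ) ≤ t := by omega
  have hD₁ : ∀ n : ℤ, n < 0 → qD A S₁ n = 0 := fun n hn => qD_neg hA hn
  -- attainment
  obtain ⟨u₂, hu₂0, hu₂t, h2⟩ := sum_qD_attained (A := qD A S₁) (S := S₂) hD₁ ht0
  obtain ⟨u₁, hu₁0, hu₁2, h1⟩ := sum_qD_attained (A := A) (S := S₁) hA hu₂0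
  have hmem : ∑ r ∈ Finset.Ico (0 : ℤ) t, qD (qD A S₁) S₂ r
      ∈ {x : ℕ | ∃ u₁ u₂ : ℤ, 0 ≤ u₁ ∧ u₁ ≤ u₂ ∧ u₂ ≤ t ∧
          x = ∑ r ∈ Finset.Ico (0 : ℤ) u₁, A r
              + ∑ r ∈ Finset.Ico u₁ u₂, S₁ r
              + ∑ r ∈ Finset.Ico u₂ t, S₂ r} := by
    exact ⟨u₁, u₂, hu₁0, hu₁2, hu₂t, by rw [h2, h1]⟩
  refine le_antisymm (le_csInf ⟨_, hmem⟩ ?_) (Nat.sInf_le hmem)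
  rintro x ⟨v₁, v₂, hv₁0, hv₁2, hv₂t, rfl⟩
  have hv₂0 : (0 : ℤ) ≤ v₂ := le_trans hv₁0 hv₁2
  have b2 := sum_qD_le (A := qD A S₁) (S := S₂) hD₁ ht0 hv₂0 hv₂t
  have b1 := sum_qD_le (A := A) (S := S₁) hA hv₂0 hv₁0 hv₁2
  omega
end

section
/- Single-queue departure formula with empty start: if A(n) = 0 for all n < 0, then for all t ≥ 1, ∑_{r=0}^{t−1} D(A,S)(r) = min over 0 ≤ u ≤ t of [ ∑_{r=0}^{u−1} A(r) + ∑_{r=u}^{t−1} S(r) ]. -/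
namespace SQAux

variable (A S : ℤ → ℕ)

/-- The increment sum. -/
noncomputable def fZ (t m : ℤ) : ℤ := ∑ r ∈ Finset.Ico m t, ((A r : ℤ) - (S r : ℤ))

lemma icc_ne {t : ℤ} (ht : 0 ≤ t) : (Finset.Icc (0:ℤ) t).Nonempty :=
  ⟨0, by simp [ht]⟩

/-- Finite ℕ-valued version of the queue length. -/
noncomputable def qN (t : ℤ) : ℕ := (Finset.Icc (0:ℤ) t).sup fun m => (fZ A S t m).toNat

lemma sum_Ico_consec (f : ℤ → ℤ) {m n k : ℤ} (h1 : m ≤ n) (h2 : n ≤ k) :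
    ∑ r ∈ Finset.Ico m n, f r + ∑ r ∈ Finset.Ico n k, f r = ∑ r ∈ Finset.Ico m k, f r := by
  rw [← Finset.sum_union]
  · rw [Finset.Ico_union_Ico_eq_Ico h1 h2]
  · exact Finset.Ico_disjoint_Ico_consecutive m n k

lemma sum_Ico_succ_top (f : ℤ → ℤ) {m n : ℤ} (h : m ≤ n) :
    ∑ r ∈ Finset.Ico m (n + 1), f r = ∑ r ∈ Finset.Ico m n, f r + f n := by
  have : Finset.Ico m (n+1) = insert n (Finset.Ico m n) := by
    ext x; simp only [Finset.mem_Ico, Finset.mem_insert]; omega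
  rw [this, Finset.sum_insert (by simp)]
  ring

lemma fZ_self (t : ℤ) : fZ A S t t = 0 := by simp [fZ]

lemma sup'_nonneg {t : ℤ} (ht : 0 ≤ t) :
    0 ≤ (Finset.Icc (0:ℤ) t).sup' (icc_ne ht) (fZ A S t) := by
  have := Finset.le_sup' (fZ A S t) (by simp [ht] : t ∈ Finset.Icc (0:ℤ) t)
  rw [fZ_self] at this
  exact this

lemma qN_cast {t : ℤ} (ht : 0 ≤ t) :
    (qN A S t : ℤ) = (Finset.Icc (0:ℤ) t).sup' (icc_ne ht) (fZ A S t) := by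
  have h1 : Int.toNat ((Finset.Icc (0:ℤ) t).sup' (icc_ne ht) (fZ A S t))
      = (Finset.Icc (0:ℤ) t).sup' (icc_ne ht) (fun m => (fZ A S t m).toNat) := by
    exact Finset.comp_sup'_eq_sup'_comp (icc_ne ht) Int.toNat
      (fun x y => Monotone.map_max (fun a b hab => Int.toNat_le_toNat hab))
  have h2 : qN A S t = Int.toNat ((Finset.Icc (0:ℤ) t).sup' (icc_ne ht) (fZ A S t)) := by
    rw [h1, qN, Finset.sup'_eq_sup]
  rw [h2, Int.toNat_of_nonneg (sup'_nonneg A S ht)]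

variable (hA : ∀ n : ℤ, n < 0 → A n = 0)
include hA

lemma fZ_le {t m : ℤ} (hm : m ≤ t) (ht : 0 ≤ t) :
    ∃ m', 0 ≤ m' ∧ m' ≤ t ∧ fZ A S t m ≤ fZ A S t m' := by
  rcases le_or_gt 0 m with h | h
  · exact ⟨m, h, hm, le_rfl⟩
  · refine ⟨0, le_rfl, ht, ?_⟩
    have hsplit : fZ A S 0 m + fZ A S t 0 = fZ A S t m :=
      sum_Ico_consec (fun r => ((A r : ℤ) - S r)) h.le ht
    have hneg : fZ A S 0 m ≤ 0 := by
      apply Finset.sum_nonpos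
      intro r hr
      rw [Finset.mem_Ico] at hr
      rw [hA r hr.2]
      simp
    omega

/-- The extended queue length agrees with the finite one at nonnegative times. -/
lemma qX_eq {t : ℤ} (ht : 0 ≤ t) : qX A S t = (qN A S t : ℕ∞) := by
  apply le_antisymm
  · rw [qX]
    apply iSup₂_le
    intro m hm
    have : (fZ A S t m).toNat ≤ qN A S t := by
      obtain ⟨m', h0, h1, h2⟩ := fZ_le A S hA hm ht
      calc (fZ A S t m).toNat ≤ (fZ A S t m').toNat := by omega
        _ ≤ qN A S t := Finset.le_sup (f := fun m => (fZ A S t m).toNat)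
            (Finset.mem_Icc.mpr ⟨h0, h1⟩)
    exact Nat.cast_le.mpr this
  · obtain ⟨m, hm, hsup⟩ := Finset.exists_mem_eq_sup' (icc_ne ht)
      (fun m => (fZ A S t m).toNat)
    rw [Finset.sup'_eq_sup] at hsup
    rw [Finset.mem_Icc] at hm
    calc (qN A S t : ℕ∞) = ((fZ A S t m).toNat : ℕ∞) := by rw [qN, hsup]
      _ ≤ qX A S t := le_iSup₂_of_le m hm.2 le_rfl

lemma qD_eq {n : ℤ} (hn : 0 ≤ n) :
    qD A S n = min (qN A S n + A n) (S n) := by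
  rw [qD, qX_eq A S hA hn, ← Nat.cast_add]
  rcases le_total (qN A S n + A n) (S n) with h | h
  · rw [min_eq_left (by exact_mod_cast h), min_eq_left h, ENat.toNat_coe]
  · rw [min_eq_right (by exact_mod_cast h), min_eq_right h, ENat.toNat_coe]

omit hA

lemma qN_zero : qN A S 0 = 0 := by
  rw [qN, Finset.Icc_self, Finset.sup_singleton]
  simp [fZ]

lemma qN_succ {n : ℤ} (hn : 0 ≤ n) :
    qN A S (n + 1) = qN A S n + A n - S n := by
  have hins : Finset.Icc (0:ℤ) (n+1) = insert (n+1) (Finset.Icc (0:ℤ) n) := by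
    ext x; simp only [Finset.mem_Icc, Finset.mem_insert]; omega
  have key : (qN A S (n+1) : ℤ) = max 0 ((qN A S n : ℤ) + A n - S n) := by
    rw [qN_cast A S (by omega : (0:ℤ) ≤ n + 1), qN_cast A S hn]
    have hsup : (Finset.Icc (0:ℤ) (n+1)).sup' (icc_ne (by omega)) (fZ A S (n+1))
        = fZ A S (n+1) (n+1) ⊔ (Finset.Icc (0:ℤ) n).sup' (icc_ne hn) (fZ A S (n+1)) := by
      rw [Finset.sup'_congr (icc_ne (by omega)) hins (fun x _ => rfl),
        Finset.sup'_insert (icc_ne hn) (fZ A S (n+1))]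
    rw [hsup, fZ_self]
    have hcongr : (Finset.Icc (0:ℤ) n).sup' (icc_ne hn) (fZ A S (n+1))
        = (Finset.Icc (0:ℤ) n).sup' (icc_ne hn) (fun m => fZ A S n m + ((A n : ℤ) - S n)) := by
      apply Finset.sup'_congr _ rfl
      intro m hm
      rw [Finset.mem_Icc] at hm
      exact sum_Ico_succ_top _ hm.2
    rw [hcongr]
    have hadd : (Finset.Icc (0:ℤ) n).sup' (icc_ne hn) (fun m => fZ A S n m + ((A n : ℤ) - S n))
        = (Finset.Icc (0:ℤ) n).sup' (icc_ne hn) (fZ A S n) + ((A n : ℤ) - S n) := by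
      rw [Finset.comp_sup'_eq_sup'_comp (icc_ne hn) (fun x => x + ((A n : ℤ) - S n))
        (fun x y => (max_add_add_right x y _).symm)]
      rfl
    rw [hadd]
    rw [show ((0:ℤ) ⊔ ((Finset.Icc (0:ℤ) n).sup' (icc_ne hn) (fZ A S n) + ((A n : ℤ) - S n)))
      = max 0 ((Finset.Icc (0:ℤ) n).sup' (icc_ne hn) (fZ A S n) + (A n : ℤ) - S n) by
        ring_nf]
  rcases le_total ((qN A S n : ℤ) + A n - S n) 0 with h | h <;>
    [rw [max_eq_left h] at key; rw [max_eq_right h] at key] <;> omega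

include hA

lemma main_identity {t : ℤ} (ht : 0 ≤ t) :
    ∑ r ∈ Finset.Ico (0:ℤ) t, qD A S r + qN A S t = ∑ r ∈ Finset.Ico (0:ℤ) t, A r := by
  revert ht
  refine Int.le_induction
    (motive := fun t _ => ∑ r ∈ Finset.Ico (0:ℤ) t, qD A S r + qN A S t
      = ∑ r ∈ Finset.Ico (0:ℤ) t, A r) ?_ ?_ t
  · simp [qN_zero]
  · intro n hn ih
    have h1 : ∀ f : ℤ → ℕ, ∑ r ∈ Finset.Ico (0:ℤ) (n+1), f r
        = ∑ r ∈ Finset.Ico (0:ℤ) n, f r + f n := by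
      intro f
      have : Finset.Ico (0:ℤ) (n+1) = insert n (Finset.Ico (0:ℤ) n) := by
        ext x; simp only [Finset.mem_Ico, Finset.mem_insert]; omega
      rw [this, Finset.sum_insert (by simp)]
      ring
    rw [h1, h1, qN_succ A S hn, qD_eq A S hA hn]
    omega

end SQAux

open SQAux in
/-- Single-queue departure formula with empty start: if `A(n) = 0` for `n < 0`,
the cumulative departures up to time `t` are given by the variational formula. -/
theorem single_queue_departure_formula (A S : ℤ → ℕ)
    (hA : ∀ n : ℤ, n < 0 → A n = 0) (t : ℤ) (ht : 1 ≤ t) :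
    ∑ r ∈ Finset.Ico (0 : ℤ) t, qD A S r
      = sInf {x : ℕ | ∃ u : ℤ, 0 ≤ u ∧ u ≤ t ∧
          x = ∑ r ∈ Finset.Ico (0 : ℤ) u, A r + ∑ r ∈ Finset.Ico u t, S r} := by
  have ht0 : (0:ℤ) ≤ t := by omega
  have hid := main_identity A S hA ht0
  -- cast lemma: fZ in terms of nat sums
  have hfZ : ∀ u : ℤ, fZ A S t u
      = ((∑ r ∈ Finset.Ico u t, A r : ℕ) : ℤ) - ((∑ r ∈ Finset.Ico u t, S r : ℕ) : ℤ) := by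
    intro u
    rw [fZ, Finset.sum_sub_distrib]
    push_cast
    ring
  have hsplitA : ∀ u : ℤ, 0 ≤ u → u ≤ t →
      ∑ r ∈ Finset.Ico (0:ℤ) u, A r + ∑ r ∈ Finset.Ico u t, A r
        = ∑ r ∈ Finset.Ico (0:ℤ) t, A r := by
    intro u h0 h1
    rw [← Finset.sum_union (Finset.Ico_disjoint_Ico_consecutive 0 u t),
      Finset.Ico_union_Ico_eq_Ico h0 h1]
  apply le_antisymm
  · apply le_csInf
    · exact ⟨∑ r ∈ Finset.Ico (0:ℤ) t, A r, t, ht0, le_rfl, by simp⟩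
    · rintro b ⟨u, h0, h1, rfl⟩
      have hle : fZ A S t u ≤ (qN A S t : ℤ) := by
        rw [qN_cast A S ht0]
        exact Finset.le_sup' (fZ A S t) (Finset.mem_Icc.mpr ⟨h0, h1⟩)
      rw [hfZ u] at hle
      have hs := hsplitA u h0 h1
      omega
  · -- upper bound: find witness achieving the min
    obtain ⟨m, hm, hsup⟩ := Finset.exists_mem_eq_sup' (icc_ne ht0) (fZ A S t)
    rw [Finset.mem_Icc] at hm
    have hq := qN_cast A S ht0
    rw [hsup, hfZ m] at hq
    have hnn := sup'_nonneg A S ht0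
    rw [hsup, hfZ m] at hnn
    apply Nat.sInf_le
    refine ⟨m, hm.1, hm.2, ?_⟩
    have hs := hsplitA m hm.1 hm.2
    omega
end

section
/- Queue-length variational identity: if A(n)=0 for n<0, then for all t ≥ 1, X₁(t) + X₂(t) = max over u₁ ≤ u₂ ≤ t (with u₁, u₂ ≥ a suitable lower bound, equivalently the sup over all u₁ ≤ u₂ ≤ t, attained with u₁ ≥ 0) of [ ∑_{r=u₁}^{t−1} A(r) − ∑_{r=u₁}^{u₂−1} S₁(r) − ∑_{r=u₂}^{t−1} S₂(r) ]. -/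
namespace TQV

theorem consec (f : ℤ → ℤ) {m n k : ℤ} (h1 : m ≤ n) (h2 : n ≤ k) :
    (∑ x ∈ Finset.Ico m n, f x) + ∑ x ∈ Finset.Ico n k, f x = ∑ x ∈ Finset.Ico m k, f x := by
  rw [← Finset.Ico_union_Ico_eq_Ico h1 h2,
    Finset.sum_union (Finset.Ico_disjoint_Ico_consecutive m n k)]

theorem succ_top (f : ℤ → ℤ) {a b : ℤ} (h : a ≤ b) :
    ∑ x ∈ Finset.Ico a (b+1), f x = (∑ x ∈ Finset.Ico a b, f x) + f b := by
  have h2 : Finset.Ico b (b+1) = {b} := by ext x; simp; omega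
  rw [← consec f h (by omega : b ≤ b + 1), h2, Finset.sum_singleton]

theorem sup'_add_const (s : Finset ℤ) (H : s.Nonempty) (f : ℤ → ℤ) (c : ℤ) :
    s.sup' H (fun x => f x + c) = s.sup' H f + c := by
  have := Finset.comp_sup'_eq_sup'_comp (f := f) H (fun x => x + c)
    (fun x y => by exact (max_add_add_right x y c).symm)
  simp only [Function.comp] at this
  exact this.symm

/-- net input over `[m, n)`. -/
noncomputable def g (A S : ℤ → ℕ) (m n : ℤ) : ℤ := ∑ r ∈ Finset.Ico m n, ((A r : ℤ) - (S r : ℤ))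

/-- integer queue length (Lindley max). -/
noncomputable def P (A S : ℤ → ℕ) (n : ℤ) : ℤ :=
  (insert 0 (Finset.Icc 0 n)).sup' (Finset.insert_nonempty _ _) (fun m => g A S m n)

theorem insert_Icc {n : ℤ} (hn : 0 ≤ n) :
    insert (0:ℤ) (Finset.Icc 0 n) = Finset.Icc 0 n :=
  Finset.insert_eq_self.mpr (by simp [hn])

theorem g_self (A S : ℤ → ℕ) (n : ℤ) : g A S n n = 0 := by simp [g]

theorem le_P (A S : ℤ → ℕ) {m n : ℤ} (h : m ∈ insert (0:ℤ) (Finset.Icc 0 n)) :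
    g A S m n ≤ P A S n :=
  Finset.le_sup' (fun m => g A S m n) h

theorem P_eq (A S : ℤ → ℕ) {n : ℤ} (hn : 0 ≤ n) :
    P A S n = (Finset.Icc 0 n).sup' (Finset.nonempty_Icc.mpr hn) (fun m => g A S m n) :=
  Finset.sup'_congr _ (insert_Icc hn) (fun _ _ => rfl)

theorem P_nonneg (A S : ℤ → ℕ) {n : ℤ} (hn : 0 ≤ n) : 0 ≤ P A S n := by
  have h : n ∈ insert (0:ℤ) (Finset.Icc 0 n) := by simp [hn]
  have := le_P A S h
  rw [g_self] at this
  exact this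

theorem g_mono_neg (A S : ℤ → ℕ) (hA : ∀ n : ℤ, n < 0 → A n = 0) {m n : ℤ}
    (hm : m ≤ 0) (hn : 0 ≤ n) : g A S m n ≤ g A S 0 n := by
  have hsplit : g A S m 0 + g A S 0 n = g A S m n := consec _ hm hn
  have h0 : g A S m 0 ≤ 0 := by
    apply Finset.sum_nonpos
    intro r hr
    simp only [Finset.mem_Ico] at hr
    rw [hA r (by omega)]
    simp
  omega

theorem qX_eq (A S : ℤ → ℕ) (hA : ∀ n : ℤ, n < 0 → A n = 0) {n : ℤ} (hn : 0 ≤ n) :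
    qX A S n = (((P A S n).toNat : ℕ) : ℕ∞) := by
  unfold qX
  apply le_antisymm
  · apply iSup_le; intro m; apply iSup_le; intro hm
    have hle : (∑ r ∈ Finset.Ico m n, ((A r : ℤ) - (S r : ℤ))) ≤ P A S n := by
      rcases le_or_gt 0 m with h0 | h0
      · exact le_P A S (by simp [h0, hm] : m ∈ insert (0:ℤ) (Finset.Icc 0 n))
      · calc g A S m n ≤ g A S 0 n := g_mono_neg A S hA h0.le hn
          _ ≤ P A S n := le_P A S (Finset.mem_insert_self _ _)
    exact Nat.cast_le.mpr (Int.toNat_le_toNat hle)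
  · obtain ⟨m, hm, hEq⟩ := Finset.exists_mem_eq_sup'
      (Finset.insert_nonempty (0:ℤ) (Finset.Icc 0 n)) (fun m => g A S m n)
    have hmn : m ≤ n := by
      simp only [Finset.mem_insert, Finset.mem_Icc] at hm; omega
    refine le_iSup_of_le m (le_iSup_of_le hmn ?_)
    have hP : P A S n = g A S m n := hEq
    rw [hP]
    exact le_rfl

theorem qX_neg (A S : ℤ → ℕ) (hA : ∀ n : ℤ, n < 0 → A n = 0) {n : ℤ} (hn : n < 0) :
    qX A S n = 0 := by
  unfold qX
  apply le_antisymm _ (by simp)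
  apply iSup_le; intro m; apply iSup_le; intro hm
  have hle : (∑ r ∈ Finset.Ico m n, ((A r : ℤ) - (S r : ℤ))) ≤ 0 := by
    apply Finset.sum_nonpos
    intro r hr
    simp only [Finset.mem_Ico] at hr
    rw [hA r (by omega)]
    simp
  rw [Int.toNat_of_nonpos hle]
  simp

theorem qD_neg (A S : ℤ → ℕ) (hA : ∀ n : ℤ, n < 0 → A n = 0) {n : ℤ} (hn : n < 0) :
    qD A S n = 0 := by
  unfold qD
  rw [qX_neg A S hA hn, hA n hn]
  simp

theorem Icc_succ {n : ℤ} (hn : 0 ≤ n) :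
    Finset.Icc (0:ℤ) (n+1) = insert (n+1) (Finset.Icc 0 n) := by
  ext x; simp only [Finset.mem_Icc, Finset.mem_insert]; omega

theorem P_succ (A S : ℤ → ℕ) {n : ℤ} (hn : 0 ≤ n) :
    P A S (n+1) = max (P A S n + (A n : ℤ) - (S n : ℤ)) 0 := by
  have hne : (Finset.Icc (0:ℤ) n).Nonempty := ⟨0, by simp [hn]⟩
  rw [P_eq A S (by omega : (0:ℤ) ≤ n + 1),
    Finset.sup'_congr _ (Icc_succ hn) (fun _ _ => rfl),
    Finset.sup'_insert hne]
  have h1 : ∀ m ∈ Finset.Icc (0:ℤ) n,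
      g A S m (n+1) = g A S m n + ((A n : ℤ) - (S n : ℤ)) := by
    intro m hm
    simp only [Finset.mem_Icc] at hm
    exact succ_top _ hm.2
  rw [Finset.sup'_congr hne rfl h1, sup'_add_const _ hne (fun m => g A S m n),
    ← P_eq A S hn]
  show g A S (n+1) (n+1) ⊔ (P A S n + ((A n : ℤ) - (S n : ℤ))) = _
  rw [g_self, sup_comm]
  have : P A S n + ((A n : ℤ) - (S n : ℤ)) = P A S n + (A n : ℤ) - (S n : ℤ) := by ring
  rw [this]

theorem qD_int (A S : ℤ → ℕ) (hA : ∀ n : ℤ, n < 0 → A n = 0) {n : ℤ} (hn : 0 ≤ n) :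
    (qD A S n : ℤ) = P A S n + (A n : ℤ) - P A S (n+1) := by
  have hq : qD A S n = min ((P A S n).toNat + A n) (S n) := by
    unfold qD
    rw [qX_eq A S hA hn, ← Nat.cast_add]
    rcases le_total ((P A S n).toNat + A n) (S n) with h | h
    · rw [min_eq_left (by exact_mod_cast h), min_eq_left h, ENat.toNat_coe]
    · rw [min_eq_right (by exact_mod_cast h), min_eq_right h, ENat.toNat_coe]
  rw [hq]
  have h1 : ((min ((P A S n).toNat + A n) (S n) : ℕ) : ℤ)
      = min (((P A S n).toNat : ℤ) + (A n : ℤ)) ((S n : ℤ)) := by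
    push_cast; rfl
  rw [h1, Int.toNat_of_nonneg (P_nonneg A S hn), P_succ A S hn]
  omega

theorem sumD (A S : ℤ → ℕ) (hA : ∀ n : ℤ, n < 0 → A n = 0) {u t : ℤ}
    (hu : 0 ≤ u) (hut : u ≤ t) :
    ∑ r ∈ Finset.Ico u t, (qD A S r : ℤ)
      = P A S u + (∑ r ∈ Finset.Ico u t, (A r : ℤ)) - P A S t := by
  refine Int.le_induction (motive := fun s _ => ∑ r ∈ Finset.Ico u s, (qD A S r : ℤ)
      = P A S u + (∑ r ∈ Finset.Ico u s, (A r : ℤ)) - P A S s) ?_ ?_ t hut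
  · simp
  · intro s hs ih
    rw [succ_top _ hs, succ_top _ hs, ih, qD_int A S hA (by omega : (0:ℤ) ≤ s)]
    ring

/-- objective in the variational formula -/
noncomputable def V (A S₁ S₂ : ℤ → ℕ) (t u₁ u₂ : ℤ) : ℤ :=
  (∑ r ∈ Finset.Ico u₁ t, (A r : ℤ))
    - ∑ r ∈ Finset.Ico u₁ u₂, (S₁ r : ℤ)
    - ∑ r ∈ Finset.Ico u₂ t, (S₂ r : ℤ)

end TQV

/-- Queue-length variational identity for a tandem started empty: with `A(n) = 0`
for `n < 0`, the sum of the two queue lengths at time `t` is the maximum over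
`0 ≤ u₁ ≤ u₂ ≤ t` of `∑_{u₁}^{t-1} A − ∑_{u₁}^{u₂-1} S₁ − ∑_{u₂}^{t-1} S₂`. -/
theorem tandem_queue_length_variational (A S₁ S₂ : ℤ → ℕ)
    (hA : ∀ n : ℤ, n < 0 → A n = 0) (t : ℤ) (ht : 1 ≤ t) :
    qX A S₁ t + qX (qD A S₁) S₂ t
      = ⨆ (u₁ : ℤ) (u₂ : ℤ) (_ : 0 ≤ u₁) (_ : u₁ ≤ u₂) (_ : u₂ ≤ t),
          (((∑ r ∈ Finset.Ico u₁ t, (A r : ℤ))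
              - ∑ r ∈ Finset.Ico u₁ u₂, (S₁ r : ℤ)
              - ∑ r ∈ Finset.Ico u₂ t, (S₂ r : ℤ)).toNat : ℕ∞) := by
  classical
  have ht0 : (0:ℤ) ≤ t := by omega
  have hD : ∀ n : ℤ, n < 0 → qD A S₁ n = 0 := fun n hn => TQV.qD_neg A S₁ hA hn
  have hP0 : 0 ≤ TQV.P A S₁ t := TQV.P_nonneg A S₁ ht0
  have hQ0 : 0 ≤ TQV.P (qD A S₁) S₂ t := TQV.P_nonneg _ S₂ ht0
  have hne : (Finset.Icc (0:ℤ) t).Nonempty := ⟨0, by simp [ht0]⟩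
  have key : TQV.P A S₁ t + TQV.P (qD A S₁) S₂ t
      = (Finset.Icc 0 t).sup' hne (fun u₂ =>
          (insert 0 (Finset.Icc 0 u₂)).sup' (Finset.insert_nonempty _ _)
            (fun u₁ => TQV.V A S₁ S₂ t u₁ u₂)) := by
    have step1 : ∀ u₂ ∈ Finset.Icc (0:ℤ) t, TQV.g (qD A S₁) S₂ u₂ t
        = (TQV.P A S₁ u₂ + (∑ r ∈ Finset.Ico u₂ t, (A r : ℤ))
            - ∑ r ∈ Finset.Ico u₂ t, (S₂ r : ℤ)) + -(TQV.P A S₁ t) := by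
      intro u₂ hu₂
      simp only [Finset.mem_Icc] at hu₂
      unfold TQV.g
      rw [Finset.sum_sub_distrib, TQV.sumD A S₁ hA hu₂.1 hu₂.2]
      ring
    have inner : ∀ u₂ ∈ Finset.Icc (0:ℤ) t,
        TQV.P A S₁ u₂ + (∑ r ∈ Finset.Ico u₂ t, (A r : ℤ))
            - ∑ r ∈ Finset.Ico u₂ t, (S₂ r : ℤ)
          = (insert 0 (Finset.Icc 0 u₂)).sup' (Finset.insert_nonempty _ _)
              (fun u₁ => TQV.V A S₁ S₂ t u₁ u₂) := by
      intro u₂ hu₂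
      simp only [Finset.mem_Icc] at hu₂
      have h := TQV.sup'_add_const (insert 0 (Finset.Icc 0 u₂)) (Finset.insert_nonempty _ _)
        (fun u₁ => TQV.g A S₁ u₁ u₂)
        ((∑ r ∈ Finset.Ico u₂ t, (A r : ℤ)) - ∑ r ∈ Finset.Ico u₂ t, (S₂ r : ℤ))
      have hP : TQV.P A S₁ u₂ + (∑ r ∈ Finset.Ico u₂ t, (A r : ℤ))
            - ∑ r ∈ Finset.Ico u₂ t, (S₂ r : ℤ)
          = (insert 0 (Finset.Icc 0 u₂)).sup' (Finset.insert_nonempty _ _)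
              (fun u₁ => TQV.g A S₁ u₁ u₂
                + ((∑ r ∈ Finset.Ico u₂ t, (A r : ℤ))
                    - ∑ r ∈ Finset.Ico u₂ t, (S₂ r : ℤ))) := by
        rw [h]; unfold TQV.P; ring
      rw [hP]
      apply Finset.sup'_congr _ rfl
      intro u₁ hu₁
      have h12 : u₁ ≤ u₂ ∧ 0 ≤ u₁ := by
        simp only [Finset.mem_insert, Finset.mem_Icc] at hu₁; omega
      have e1 : TQV.g A S₁ u₁ u₂
          = (∑ r ∈ Finset.Ico u₁ u₂, (A r : ℤ)) - ∑ r ∈ Finset.Ico u₁ u₂, (S₁ r : ℤ) :=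
        Finset.sum_sub_distrib _ _
      have e2 := TQV.consec (fun r => (A r : ℤ)) h12.1 hu₂.2
      simp only [TQV.V]
      linarith [e1, e2]
    calc TQV.P A S₁ t + TQV.P (qD A S₁) S₂ t
        = TQV.P A S₁ t + (Finset.Icc 0 t).sup' hne (fun u₂ => TQV.g (qD A S₁) S₂ u₂ t) := by
          rw [TQV.P_eq (qD A S₁) S₂ ht0]
      _ = TQV.P A S₁ t + (Finset.Icc 0 t).sup' hne (fun u₂ =>
              (TQV.P A S₁ u₂ + (∑ r ∈ Finset.Ico u₂ t, (A r : ℤ))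
                - ∑ r ∈ Finset.Ico u₂ t, (S₂ r : ℤ)) + -(TQV.P A S₁ t)) := by
          rw [Finset.sup'_congr hne rfl step1]
      _ = TQV.P A S₁ t + ((Finset.Icc 0 t).sup' hne (fun u₂ =>
              TQV.P A S₁ u₂ + (∑ r ∈ Finset.Ico u₂ t, (A r : ℤ))
                - ∑ r ∈ Finset.Ico u₂ t, (S₂ r : ℤ)) + -(TQV.P A S₁ t)) := by
          rw [TQV.sup'_add_const]
      _ = (Finset.Icc 0 t).sup' hne (fun u₂ =>
              TQV.P A S₁ u₂ + (∑ r ∈ Finset.Ico u₂ t, (A r : ℤ))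
                - ∑ r ∈ Finset.Ico u₂ t, (S₂ r : ℤ)) := by ring
      _ = _ := Finset.sup'_congr hne rfl inner
  rw [TQV.qX_eq A S₁ hA ht0, TQV.qX_eq (qD A S₁) S₂ hD ht0, ← Nat.cast_add,
    ← Int.toNat_add hP0 hQ0, key]
  apply le_antisymm
  · obtain ⟨u₂, hu₂, h2⟩ := Finset.exists_mem_eq_sup' hne (fun u₂ =>
      (insert 0 (Finset.Icc 0 u₂)).sup' (Finset.insert_nonempty _ _)
        (fun u₁ => TQV.V A S₁ S₂ t u₁ u₂))
    obtain ⟨u₁, hu₁, h1⟩ := Finset.exists_mem_eq_sup'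
      (Finset.insert_nonempty (0:ℤ) (Finset.Icc 0 u₂)) (fun u₁ => TQV.V A S₁ S₂ t u₁ u₂)
    simp only [Finset.mem_Icc] at hu₂
    have hu1 : 0 ≤ u₁ ∧ u₁ ≤ u₂ := by
      simp only [Finset.mem_insert, Finset.mem_Icc] at hu₁; omega
    rw [h2, h1]
    refine le_iSup_of_le u₁ (le_iSup_of_le u₂ (le_iSup_of_le hu1.1
      (le_iSup_of_le hu1.2 (le_iSup_of_le hu₂.2 ?_))))
    exact le_rfl
  · refine iSup_le fun u₁ => iSup_le fun u₂ => iSup_le fun h1 => iSup_le fun h12 =>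
      iSup_le fun h2t => ?_
    have m1 : u₁ ∈ insert (0:ℤ) (Finset.Icc 0 u₂) := by
      simp only [Finset.mem_insert, Finset.mem_Icc]; omega
    have m2 : u₂ ∈ Finset.Icc (0:ℤ) t := by simp only [Finset.mem_Icc]; omega
    have hle : TQV.V A S₁ S₂ t u₁ u₂ ≤ (Finset.Icc 0 t).sup' hne (fun u₂ =>
        (insert 0 (Finset.Icc 0 u₂)).sup' (Finset.insert_nonempty _ _)
          (fun u₁ => TQV.V A S₁ S₂ t u₁ u₂)) :=
      le_trans (Finset.le_sup' (fun u₁ => TQV.V A S₁ S₂ t u₁ u₂) m1)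
        (Finset.le_sup' (fun v => (insert 0 (Finset.Icc 0 v)).sup'
          (Finset.insert_nonempty _ _) (fun u₁ => TQV.V A S₁ S₂ t u₁ v)) m2)
    exact Nat.cast_le.mpr (Int.toNat_le_toNat hle)
end

section
/- Pathwise interchange step: let S₁, S₂ : ℤ → ℕ be service processes and let S̃₂ = D(S₁, S₂) be the departure process of the queue with arrivals S₁ and services S₂. Fix s ≤ t. Suppose that the queue (S₁, S₂) has some unused service time in {s,...,t−1} and let n be the last such time (i.e. the largest n in {s,...,t−1} with S₂(n) > S̃₂(n)), and suppose ∑_{i=s}^{n} S₁(i) ≤ ∑_{i=s}^{n} S̃₂(i). Then min over s ≤ u ≤ t of [∑_{r=s}^{u−1} S₁(r) + ∑_{r=u}^{t−1} S₂(r)] = min over s ≤ u ≤ t of [∑_{r=s}^{u−1} S₁(r) + ∑_{r=u}^{t−1} S̃₂(r)]. (If there is no unused service in {s,...,t−1} the two expressions are trivially equal.) -/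
lemma sum_Ico_split {M : Type*} [AddCommMonoid M] (f : ℤ → M) {m n k : ℤ} (h1 : m ≤ n) (h2 : n ≤ k) :
    ∑ r ∈ Finset.Ico m k, f r = ∑ r ∈ Finset.Ico m n, f r + ∑ r ∈ Finset.Ico n k, f r := by
  rw [← Finset.Ico_union_Ico_eq_Ico h1 h2, Finset.sum_union (by
    simp [Finset.disjoint_left]; omega)]

lemma sum_Ico_top {M : Type*} [AddCommMonoid M] (f : ℤ → M) {m n : ℤ} (h : m ≤ n) :
    ∑ r ∈ Finset.Ico m (n+1), f r = ∑ r ∈ Finset.Ico m n, f r + f n := by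
  rw [sum_Ico_split f h (by omega)]
  congr 1
  rw [show Finset.Ico n (n+1) = {n} by ext x; simp; omega]
  simp

lemma qX_le (A S : ℤ → ℕ) {m n : ℤ} (h : m ≤ n) :
    (((∑ r ∈ Finset.Ico m n, ((A r : ℤ) - (S r : ℤ))).toNat : ℕ∞)) ≤ qX A S n :=
  le_iSup₂ (f := fun m (_ : m ≤ n) =>
    (((∑ r ∈ Finset.Ico m n, ((A r : ℤ) - (S r : ℤ))).toNat : ℕ∞))) m h

lemma qX_attained (A S : ℤ → ℕ) (n : ℤ) (hfin : qX A S n ≠ ⊤) :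
    ∃ m ≤ n, (∑ r ∈ Finset.Ico m n, ((A r : ℤ) - (S r : ℤ))) = ((qX A S n).toNat : ℤ) := by
  set k := (qX A S n).toNat with hk
  have hq : qX A S n = (k : ℕ∞) := (ENat.coe_toNat hfin).symm
  rcases Nat.eq_zero_or_pos k with h0 | hpos
  · exact ⟨n, le_refl n, by simp [h0]⟩
  · have hlt : ((k - 1 : ℕ) : ℕ∞) < qX A S n := by
      rw [hq]; exact_mod_cast Nat.sub_lt hpos one_pos
    rw [qX] at hlt
    rw [lt_iSup_iff] at hlt
    obtain ⟨m, hm⟩ := hlt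
    rw [lt_iSup_iff] at hm
    obtain ⟨hmn, hm⟩ := hm
    have hub : (((∑ r ∈ Finset.Ico m n, ((A r : ℤ) - (S r : ℤ))).toNat : ℕ∞)) ≤ (k : ℕ∞) := by
      rw [← hq]; exact qX_le A S hmn
    have h1 : k - 1 < (∑ r ∈ Finset.Ico m n, ((A r : ℤ) - (S r : ℤ))).toNat := by
      exact_mod_cast hm
    have h2 : (∑ r ∈ Finset.Ico m n, ((A r : ℤ) - (S r : ℤ))).toNat ≤ k := by
      exact_mod_cast hub
    exact ⟨m, hmn, by omega⟩

lemma qX_succ (A S : ℤ → ℕ) (n : ℤ) (hfin : qX A S n ≠ ⊤) :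
    qX A S (n+1) = (qX A S n + (A n : ℕ∞)) - (S n : ℕ∞) := by
  obtain ⟨m₀, hm₀, hsum0⟩ := qX_attained A S n hfin
  set k := (qX A S n).toNat with hk
  have hq : qX A S n = (k : ℕ∞) := (ENat.coe_toNat hfin).symm
  apply le_antisymm
  · rw [qX]
    apply iSup₂_le
    intro m hm
    rcases eq_or_lt_of_le hm with rfl | hm'
    · simp
    · have hmn : m ≤ n := by omega
      rw [sum_Ico_top _ hmn]
      set P := ∑ r ∈ Finset.Ico m n, ((A r : ℤ) - (S r : ℤ)) with hP
      have h1 : ((P.toNat : ℕ∞)) ≤ qX A S n := qX_le A S hmn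
      have h2 : (P + ((A n : ℤ) - (S n : ℤ))).toNat ≤ P.toNat + A n - S n := by omega
      calc (((P + ((A n : ℤ) - (S n : ℤ))).toNat : ℕ∞))
          ≤ ((P.toNat + A n - S n : ℕ) : ℕ∞) := by exact_mod_cast h2
        _ = ((P.toNat : ℕ∞) + (A n : ℕ∞)) - (S n : ℕ∞) := by exact_mod_cast rfl
        _ ≤ (qX A S n + (A n : ℕ∞)) - (S n : ℕ∞) :=
            tsub_le_tsub_right (add_le_add_left h1 _) _
  · rw [hq]
    have h2 : (((k + A n - S n : ℕ)) : ℕ∞) ≤ qX A S (n+1) := by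
      have h3 := qX_le A S (show m₀ ≤ n + 1 by omega)
      rw [sum_Ico_top _ hm₀, hsum0] at h3
      have : (((k : ℤ) + ((A n : ℤ) - (S n : ℤ))).toNat) = k + A n - S n := by omega
      rwa [this] at h3
    calc ((k : ℕ∞) + (A n : ℕ∞)) - (S n : ℕ∞)
        = (((k + A n - S n : ℕ)) : ℕ∞) := by exact_mod_cast rfl
      _ ≤ qX A S (n+1) := h2

lemma qD_eq (A S : ℤ → ℕ) (n : ℤ) (hfin : qX A S n ≠ ⊤) :
    qD A S n = min ((qX A S n).toNat + A n) (S n) := by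
  set k := (qX A S n).toNat with hk
  have hq : qX A S n = (k : ℕ∞) := (ENat.coe_toNat hfin).symm
  rw [qD, hq]
  rcases le_total (k + A n) (S n) with h | h
  · rw [min_eq_left (by exact_mod_cast h), min_eq_left h, ← Nat.cast_add, ENat.toNat_coe]
  · rw [min_eq_right (by exact_mod_cast h), min_eq_right h, ENat.toNat_coe]

lemma qD_step (A S : ℤ → ℕ) (n : ℤ) (hfin : qX A S n ≠ ⊤) :
    (qD A S n : ℕ∞) + qX A S (n+1) = qX A S n + (A n : ℕ∞) := by
  obtain ⟨k, hk⟩ : ∃ k : ℕ, qX A S n = (k : ℕ∞) := ⟨_, (ENat.coe_toNat hfin).symm⟩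
  rw [qX_succ A S n hfin, qD_eq A S n hfin, hk, ENat.toNat_coe]
  have : ((k : ℕ∞) + (A n : ℕ∞)) - (S n : ℕ∞) = ((k + A n - S n : ℕ) : ℕ∞) := by
    exact_mod_cast rfl
  rw [this, ← Nat.cast_add, ← Nat.cast_add, Nat.cast_inj]
  omega

lemma qConserve (A S : ℤ → ℕ) (hfin : ∀ m : ℤ, qX A S m ≠ ⊤) (u : ℤ) :
    ∀ m, u ≤ m → qX A S u + ((∑ r ∈ Finset.Ico u m, A r : ℕ) : ℕ∞)
      = qX A S m + ((∑ r ∈ Finset.Ico u m, qD A S r : ℕ) : ℕ∞) := by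
  refine fun m hm => Int.le_induction
    (motive := fun m _ => qX A S u + ((∑ r ∈ Finset.Ico u m, A r : ℕ) : ℕ∞)
      = qX A S m + ((∑ r ∈ Finset.Ico u m, qD A S r : ℕ) : ℕ∞)) ?_ ?_ m hm
  · simp
  · intro m hm ih
    have h := qD_step A S m (hfin m)
    rw [sum_Ico_top _ hm, sum_Ico_top _ hm, Nat.cast_add, Nat.cast_add]
    calc qX A S u + (((∑ r ∈ Finset.Ico u m, A r : ℕ) : ℕ∞) + ((A m : ℕ) : ℕ∞))
        = (qX A S u + ((∑ r ∈ Finset.Ico u m, A r : ℕ) : ℕ∞)) + (A m : ℕ∞) := by ring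
      _ = (qX A S m + ((∑ r ∈ Finset.Ico u m, qD A S r : ℕ) : ℕ∞)) + (A m : ℕ∞) := by
          rw [ih]
      _ = (qX A S m + (A m : ℕ∞)) + ((∑ r ∈ Finset.Ico u m, qD A S r : ℕ) : ℕ∞) := by ring
      _ = ((qD A S m : ℕ∞) + qX A S (m+1)) + ((∑ r ∈ Finset.Ico u m, qD A S r : ℕ) : ℕ∞) := by
          rw [h]
      _ = qX A S (m+1) + (((∑ r ∈ Finset.Ico u m, qD A S r : ℕ) : ℕ∞) + ((qD A S m : ℕ) : ℕ∞)) := by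
          ring

lemma qD_le (A S : ℤ → ℕ) (n : ℤ) : qD A S n ≤ S n := by
  rw [qD]
  calc (min (qX A S n + (A n : ℕ∞)) ((S n : ℕ∞))).toNat
      ≤ ((S n : ℕ∞)).toNat := ENat.toNat_le_toNat (min_le_right _ _) (by simp)
    _ = S n := by simp

/-- Pathwise interchange step: removing the unused services after the last
unused-service time does not change the two-queue variational functional.
Here `S̃₂ = D(S₁,S₂)` is the departure process of the queue feeding `S₁` into `S₂`,
`n` is the last time in `{s,…,t−1}` with unused service, and we assume that by
time `n` cumulative departures dominate cumulative arrivals. -/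
theorem interchange_step (S₁ S₂ : ℤ → ℕ)
    (hfin : ∀ m : ℤ, qX S₁ S₂ m ≠ ⊤)
    (s t n : ℤ) (hst : s ≤ t) (hsn : s ≤ n) (hnt : n < t)
    (hunused : qD S₁ S₂ n < S₂ n)
    (hlast : ∀ k : ℤ, n < k → k < t → qD S₁ S₂ k = S₂ k)
    (hsum : ∑ i ∈ Finset.Icc s n, S₁ i ≤ ∑ i ∈ Finset.Icc s n, qD S₁ S₂ i) :
    sInf {x : ℕ | ∃ u : ℤ, s ≤ u ∧ u ≤ t ∧
        x = ∑ r ∈ Finset.Ico s u, S₁ r + ∑ r ∈ Finset.Ico u t, S₂ r}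
      = sInf {x : ℕ | ∃ u : ℤ, s ≤ u ∧ u ≤ t ∧
        x = ∑ r ∈ Finset.Ico s u, S₁ r + ∑ r ∈ Finset.Ico u t, qD S₁ S₂ r} := by
  -- X(n+1) = 0
  have hq := (ENat.coe_toNat (hfin n)).symm
  have hDn := qD_eq S₁ S₂ n (hfin n)
  have hXn1 : qX S₁ S₂ (n+1) = 0 := by
    rw [qX_succ S₁ S₂ n (hfin n), hq]
    have hlt : (qX S₁ S₂ n).toNat + S₁ n < S₂ n := by
      rw [hDn] at hunused; omega
    have : ((qX S₁ S₂ n).toNat : ℕ∞) + (S₁ n : ℕ∞) ≤ (S₂ n : ℕ∞) := by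
      exact_mod_cast hlt.le
    exact tsub_eq_zero_of_le this
  -- key inequality
  have key : ∀ u : ℤ, u ≤ n → ∑ r ∈ Finset.Ico u (n+1), S₁ r
      ≤ ∑ r ∈ Finset.Ico u (n+1), qD S₁ S₂ r := by
    intro u hu
    have h := qConserve S₁ S₂ hfin u (n+1) (by omega)
    rw [hXn1, zero_add] at h
    have : ((∑ r ∈ Finset.Ico u (n+1), S₁ r : ℕ) : ℕ∞)
        ≤ ((∑ r ∈ Finset.Ico u (n+1), qD S₁ S₂ r : ℕ) : ℕ∞) := by
      rw [← h]; exact le_add_self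
    exact_mod_cast this
  -- tail equality
  have tail : ∀ u : ℤ, n < u → ∑ r ∈ Finset.Ico u t, qD S₁ S₂ r
      = ∑ r ∈ Finset.Ico u t, S₂ r := by
    intro u hu
    apply Finset.sum_congr rfl
    intro r hr
    simp only [Finset.mem_Ico] at hr
    exact hlast r (by omega) hr.2
  apply le_antisymm
  · refine le_csInf ⟨_, ⟨n+1, by omega, by omega, rfl⟩⟩ ?_
    rintro y ⟨u, hsu, hut, rfl⟩
    rcases le_or_gt u n with hun | hun
    · -- use witness n+1
      have hmem : (∑ r ∈ Finset.Ico s (n+1), S₁ r + ∑ r ∈ Finset.Ico (n+1) t, S₂ r)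
          ∈ {x : ℕ | ∃ u : ℤ, s ≤ u ∧ u ≤ t ∧
            x = ∑ r ∈ Finset.Ico s u, S₁ r + ∑ r ∈ Finset.Ico u t, S₂ r} :=
        ⟨n+1, by omega, by omega, rfl⟩
      apply le_trans (Nat.sInf_le hmem)
      rw [sum_Ico_split S₁ hsu (by omega : u ≤ n+1),
        sum_Ico_split (qD S₁ S₂) (by omega : u ≤ n+1) (by omega : (n:ℤ)+1 ≤ t),
        tail (n+1) (by omega)]
      have := key u hun
      omega
    · apply Nat.sInf_le
      exact ⟨u, hsu, hut, by rw [tail u hun]⟩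
  · refine le_csInf ⟨_, ⟨n+1, by omega, by omega, rfl⟩⟩ ?_
    rintro y ⟨u, hsu, hut, rfl⟩
    have hmem : (∑ r ∈ Finset.Ico s u, S₁ r + ∑ r ∈ Finset.Ico u t, qD S₁ S₂ r)
        ∈ {x : ℕ | ∃ u : ℤ, s ≤ u ∧ u ≤ t ∧
          x = ∑ r ∈ Finset.Ico s u, S₁ r + ∑ r ∈ Finset.Ico u t, qD S₁ S₂ r} :=
      ⟨u, hsu, hut, rfl⟩
    apply le_trans (Nat.sInf_le hmem)
    have : ∑ r ∈ Finset.Ico u t, qD S₁ S₂ r ≤ ∑ r ∈ Finset.Ico u t, S₂ r :=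
      Finset.sum_le_sum (fun r _ => qD_le S₁ S₂ r)
    omega
end
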